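/- arXiv:0908.2641 — 2 statements merged into one kernel-verified Lean document; each statement's English description precedes it below -/
import Mathlib

section
/- Under the bijection psi from noncrossing partitions of type B_n to pairs (sigma, x): if pi has no zero block then sigma has the same type as pi (i.e., for each i, the number of blocks of sigma of size i equals the number of pairs (B,-B) of blocks of pi of size i), and if pi has a zero block of size 2i then the type of sigma is obtained from the type of pi by adding one block of size i. -/
open Finset

/-- The ground set `{±1, …, ±n} ⊆ ℤ`. -/
noncomputable abbrev gsB (n : ℕ) : Finset ℤ := (Finset.Icc (-(n : ℤ)) (n : ℤ)).erase 0

/-- The negative `-B` of a set of integers. -/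
def negSet (B : Finset ℤ) : Finset ℤ := B.image (fun x => -x)

/-- `a` and `b` lie in a common block of the partition `P`. -/
def SameBlock {α : Type*} [DecidableEq α] {s : Finset α} (P : Finpartition s) (a b : α) : Prop :=
  ∃ B ∈ P.parts, a ∈ B ∧ b ∈ B

/-- Refinement order on partitions. -/
def Refines {α : Type*} [DecidableEq α] {s : Finset α} (P Q : Finpartition s) : Prop :=
  ∀ B ∈ P.parts, ∃ C ∈ Q.parts, B ⊆ C

/-- A partition of `{±1,…,±n}` is of type `Bₙ`: blocks come in pairs `B, -B` and there is at
most one block with `B = -B` (the zero block). -/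
def IsBPartition {n : ℕ} (P : Finpartition (gsB n)) : Prop :=
  (∀ B ∈ P.parts, negSet B ∈ P.parts) ∧
  (∀ B ∈ P.parts, ∀ C ∈ P.parts, negSet B = B → negSet C = C → B = C)

/-- The position of `x ∈ {±1,…,±n}` in the circular order `1, 2, …, n, -1, -2, …, -n`. -/
def posB (n : ℕ) (x : ℤ) : ℕ := if 0 < x then x.toNat - 1 else n + (-x).toNat - 1

/-- A type `Bₙ` partition is noncrossing: no two blocks cross in the circular representation,
i.e. there are no positions `p a < p b < p c < p d` (in the circular order
`1,…,n,-1,…,-n`) with `a, c` in one block and `b, d` in a different one. -/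
def IsNoncrossingB {n : ℕ} (P : Finpartition (gsB n)) : Prop :=
  ∀ a b c d : ℤ, posB n a < posB n b → posB n b < posB n c → posB n c < posB n d →
    SameBlock P a c → SameBlock P b d → SameBlock P a b

/-- The partition has a zero block. -/
def HasZeroBlock {n : ℕ} (P : Finpartition (gsB n)) : Prop :=
  ∃ B ∈ P.parts, negSet B = B

/-- The number of unordered pairs `(B, -B)` of nonzero blocks of `P`. -/
def nzB {n : ℕ} (P : Finpartition (gsB n)) : ℕ :=
  (P.parts.filter fun B => negSet B ≠ B).card / 2

/-- The number of unordered pairs `(B, -B)` of nonzero blocks of `P` of size `i`. -/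
def btype {n : ℕ} (P : Finpartition (gsB n)) (i : ℕ) : ℕ :=
  (P.parts.filter fun B => negSet B ≠ B ∧ B.card = i).card / 2

/-- Every block of `P` has size divisible by `k`. -/
def IsKDivisible {α : Type*} [DecidableEq α] {s : Finset α} (k : ℕ) (P : Finpartition s) : Prop :=
  ∀ B ∈ P.parts, k ∣ B.card

/-- The parts of the noncrossing partition `σ` of `[n]` obtained from a type `Bₙ` partition
`π` by identifying `i` and `-i` (taking absolute values of all elements). -/
def quotParts {n : ℕ} (P : Finpartition (gsB n)) : Finset (Finset ℕ) :=
  P.parts.image (fun B => B.image Int.natAbs)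

section Aux

lemma mem_negSet {B : Finset ℤ} {a : ℤ} : a ∈ negSet B ↔ -a ∈ B := by
  simp only [negSet, Finset.mem_image]
  constructor
  · rintro ⟨x, hx, rfl⟩; simpa using hx
  · exact fun h => ⟨-a, h, neg_neg a⟩

lemma negSet_negSet (B : Finset ℤ) : negSet (negSet B) = B := by
  ext a; simp [mem_negSet]

lemma card_negSet (B : Finset ℤ) : (negSet B).card = B.card :=
  Finset.card_image_of_injective _ neg_injective

lemma image_natAbs_negSet (B : Finset ℤ) :
    (negSet B).image Int.natAbs = B.image Int.natAbs := by
  ext a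
  simp [negSet, Finset.mem_image, Int.natAbs_neg]

variable {n : ℕ} {π : Finpartition (gsB n)}

lemma mem_parts_ne_zero {B : Finset ℤ} (hBp : B ∈ π.parts) {a : ℤ} (ha : a ∈ B) :
    a ≠ 0 := fun h => by
  have := π.le hBp ha
  rw [h] at this
  exact (Finset.mem_erase.mp this).1 rfl

lemma no_pair (hB : IsBPartition π) {B : Finset ℤ} (hBp : B ∈ π.parts)
    (hne : negSet B ≠ B) {a : ℤ} (ha : a ∈ B) : -a ∉ B := by
  intro h
  exact hne (π.eq_of_mem_parts (hB.1 B hBp) hBp (mem_negSet.mpr h) ha)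

lemma card_image_natAbs (hB : IsBPartition π) {B : Finset ℤ} (hBp : B ∈ π.parts)
    (hne : negSet B ≠ B) : (B.image Int.natAbs).card = B.card := by
  apply Finset.card_image_of_injOn
  intro a ha b hb hab
  rcases Int.natAbs_eq_natAbs_iff.mp hab with h | h
  · exact h
  · exact absurd (by rw [h, neg_neg]; exact hb) (no_pair hB hBp hne ha)

lemma eq_negSet_of_image_eq (hB : IsBPartition π) {B C : Finset ℤ}
    (hBp : B ∈ π.parts) (hCp : C ∈ π.parts) (hne : B ≠ C)
    (him : B.image Int.natAbs = C.image Int.natAbs) : C = negSet B := by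
  have hsub : C ⊆ negSet B := by
    intro c hc
    have : c.natAbs ∈ B.image Int.natAbs := him ▸ Finset.mem_image_of_mem _ hc
    obtain ⟨b, hb, hab⟩ := Finset.mem_image.mp this
    rcases Int.natAbs_eq_natAbs_iff.mp hab with h | h
    · exact absurd (π.eq_of_mem_parts hBp hCp (h ▸ hb) hc) hne
    · exact mem_negSet.mpr (by rw [← h]; exact hb)
  obtain ⟨c, hc⟩ := π.nonempty_of_mem_parts hCp
  exact π.eq_of_mem_parts hCp (hB.1 B hBp) hc (hsub hc)

lemma zero_block_card {Z : Finset ℤ} (hZp : Z ∈ π.parts)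
    (hz : negSet Z = Z) : Z.card = 2 * (Z.image Int.natAbs).card := by
  have hneg : ∀ x ∈ Z, -x ∈ Z := fun x hx => by
    rw [← hz]; exact mem_negSet.mpr (by simpa using hx)
  have key : ∀ b ∈ Z.image Int.natAbs,
      (Z.filter fun a => a.natAbs = b).card = 2 := by
    intro b hb
    obtain ⟨a, ha, rfl⟩ := Finset.mem_image.mp hb
    have hfib : Z.filter (fun x => x.natAbs = a.natAbs) = {a, -a} := by
      ext x
      simp only [Finset.mem_filter, Finset.mem_insert, Finset.mem_singleton]
      constructor
      · rintro ⟨hx, habs⟩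
        exact Int.natAbs_eq_natAbs_iff.mp habs
      · rintro (rfl | rfl)
        · exact ⟨ha, rfl⟩
        · exact ⟨hneg a ha, Int.natAbs_neg a⟩
    rw [hfib]
    exact Finset.card_pair (fun h => (mem_parts_ne_zero hZp ha) (by omega))
  have := Finset.card_eq_sum_card_image Int.natAbs Z
  rw [Finset.sum_congr rfl key, Finset.sum_const, smul_eq_mul] at this
  omega

lemma btype_eq (hB : IsBPartition π) (i : ℕ) :
    ((π.parts.filter fun B => negSet B ≠ B ∧ B.card = i).image
      (fun B => B.image Int.natAbs)).card = btype π i := by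
  set S := π.parts.filter fun B => negSet B ≠ B ∧ B.card = i with hS
  have hmemS : ∀ B ∈ S, B ∈ π.parts ∧ negSet B ≠ B ∧ B.card = i := fun B hb => by
    simpa [hS, Finset.mem_filter] using hb
  have hnegS : ∀ B ∈ S, negSet B ∈ S := by
    intro B hBs
    obtain ⟨hBp, hne, hci⟩ := hmemS B hBs
    refine Finset.mem_filter.mpr ⟨hB.1 B hBp, ?_, by rw [card_negSet, hci]⟩
    rw [negSet_negSet]; exact fun h => hne h.symm
  have key : ∀ A ∈ S.image (fun B => B.image Int.natAbs),
      (S.filter fun B => B.image Int.natAbs = A).card = 2 := by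
    intro A hA
    obtain ⟨B, hBs, rfl⟩ := Finset.mem_image.mp hA
    obtain ⟨hBp, hne, hci⟩ := hmemS B hBs
    have hfib : S.filter (fun C => C.image Int.natAbs = B.image Int.natAbs)
        = {B, negSet B} := by
      ext C
      simp only [Finset.mem_filter, Finset.mem_insert, Finset.mem_singleton]
      constructor
      · rintro ⟨hCs, him⟩
        by_cases h : C = B
        · exact Or.inl h
        · exact Or.inr (eq_negSet_of_image_eq hB hBp (hmemS C hCs).1
            (fun e => h e.symm) him.symm)
      · rintro (rfl | rfl)
        · exact ⟨hBs, rfl⟩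
        · exact ⟨hnegS B hBs, image_natAbs_negSet B⟩
    rw [hfib]
    exact Finset.card_pair (fun h => hne h.symm)
  have hcount := Finset.card_eq_sum_card_image (fun B => B.image Int.natAbs) S
  rw [Finset.sum_congr rfl key, Finset.sum_const, smul_eq_mul] at hcount
  unfold btype
  rw [← hS]
  omega

end Aux

/-- **Theorem (type behaviour of the bijection ψ).** If `π ∈ NC_B(n)` and `σ` is the
noncrossing partition of `[n]` obtained from `π` by identifying `i` and `-i`, then:
if `π` has no zero block, `σ` has the same type as `π` (for each `i`, the number of blocks of
`σ` of size `i` equals the number of pairs `(B, -B)` of blocks of `π` of size `i`), and if `π`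
has a zero block of size `2i₀` the type of `σ` is obtained from that of `π` by adding one
block of size `i₀`. -/
theorem stmt5 (n : ℕ) (π : Finpartition (gsB n))
    (hB : IsBPartition π) (hnc : IsNoncrossingB π) :
    (¬ HasZeroBlock π →
      ∀ i, ((quotParts π).filter fun A => A.card = i).card = btype π i) ∧
    (∀ Z ∈ π.parts, negSet Z = Z →
      ∀ i, ((quotParts π).filter fun A => A.card = i).card =
        btype π i + (if Z.card = 2 * i then 1 else 0)) := by
  constructor
  · intro hnz i
    rw [← btype_eq hB i]
    congr 1
    ext A
    simp only [Finset.mem_filter, quotParts, Finset.mem_image]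
    constructor
    · rintro ⟨⟨B, hBp, rfl⟩, hci⟩
      have hne : negSet B ≠ B := fun h => hnz ⟨B, hBp, h⟩
      exact ⟨B, ⟨hBp, hne,
        by rw [← card_image_natAbs hB hBp hne]; exact hci⟩, rfl⟩
    · rintro ⟨B, ⟨hBp, hne, hci⟩, rfl⟩
      exact ⟨⟨B, hBp, rfl⟩, by rw [card_image_natAbs hB hBp hne]; exact hci⟩
  · intro Z hZp hz i
    set S := π.parts.filter fun B => negSet B ≠ B ∧ B.card = i with hS
    set M := S.image (fun B => B.image Int.natAbs) with hM
    have hZnotM : Z.image Int.natAbs ∉ M := by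
      intro h
      obtain ⟨B, hBs, him⟩ := Finset.mem_image.mp h
      obtain ⟨hBp, hne, -⟩ := Finset.mem_filter.mp hBs
      have hBZ : B ≠ Z := fun e => hne (e ▸ hz)
      have hZB : Z = negSet B := eq_negSet_of_image_eq hB hBp hZp hBZ him
      have hBnZ : negSet Z = B := by rw [hZB, negSet_negSet]
      exact hBZ (by rw [← hBnZ, hz])
    have hMc : M.card = btype π i := by rw [hM, hS]; exact btype_eq hB i
    have hset : (quotParts π).filter (fun A => A.card = i) =
        if Z.card = 2 * i then insert (Z.image Int.natAbs) M else M := by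
      ext A
      simp only [Finset.mem_filter, quotParts, Finset.mem_image]
      constructor
      · rintro ⟨⟨B, hBp, rfl⟩, hci⟩
        by_cases hne : negSet B = B
        · have hBZ : B = Z := hB.2 B hBp Z hZp hne hz
          subst hBZ
          have h2 := zero_block_card hBp hne
          rw [if_pos (by omega)]
          exact Finset.mem_insert_self _ _
        · have hBs : B ∈ S := Finset.mem_filter.mpr ⟨hBp, hne,
            by rw [← card_image_natAbs hB hBp hne]; exact hci⟩
          have hAM : B.image Int.natAbs ∈ M := Finset.mem_image_of_mem _ hBs
          split_ifs
          · exact Finset.mem_insert_of_mem hAM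
          · exact hAM
      · intro hA
        split_ifs at hA with h2i
        · rcases Finset.mem_insert.mp hA with rfl | hAM
          · refine ⟨⟨Z, hZp, rfl⟩, ?_⟩
            have := zero_block_card hZp hz
            omega
          · obtain ⟨B, hBs, rfl⟩ := Finset.mem_image.mp hAM
            obtain ⟨hBp, hne, hci⟩ := Finset.mem_filter.mp hBs
            exact ⟨⟨B, hBp, rfl⟩, by rw [card_image_natAbs hB hBp hne]; exact hci⟩
        · obtain ⟨B, hBs, rfl⟩ := Finset.mem_image.mp hA
          obtain ⟨hBp, hne, hci⟩ := Finset.mem_filter.mp hBs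
          exact ⟨⟨B, hBp, rfl⟩, by rw [card_image_natAbs hB hBp hne]; exact hci⟩
    rw [hset]
    split_ifs with h2i
    · rw [Finset.card_insert_of_notMem hZnotM, hMc]
    · rw [hMc, Nat.add_zero]
end

section
/- There is a bijection tau between the set of pairs (L,R) of subsets of [n] with |L|=|R| whose cyclic parenthesization leaves at least one integer unenclosed, and the set of pairs (B, pi) where pi is a noncrossing partition of [n] and B is a block of pi. Moreover, if tau(L,R) = (B,pi) where pi has type (b; b_1,...,b_n) and |B| = j, then the type of (L,R) is (b-1; b_1,...,b_j - 1,...,b_n). -/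
open Finset
open scoped Classical

/-- The ground set `[n] = {1, …, n}`. -/
abbrev gsA (n : ℕ) : Finset ℕ := Finset.Icc 1 n

/-- A partition of `[n]` is noncrossing. -/
def IsNoncrossing {n : ℕ} (P : Finpartition (gsA n)) : Prop :=
  ∀ a b c d : ℕ, a < b → b < c → c < d →
    SameBlock P a c → SameBlock P b d → SameBlock P a b

/-! Positions of the tokens of the cyclic parenthesization of a pair `(L, R)` of subsets of
`[n]`: the left parenthesis of `i` sits at `3i`, the integer `i` at `3i+1`, and the right
parenthesis of `i` at `3i+2`, all read cyclically modulo `M = 3(n+1)`. -/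

/-- Position of `x` relative to `a` on the cycle `ℤ/M`. -/
def relM (M a x : ℕ) : ℤ := ((x : ℤ) - (a : ℤ)) % (M : ℤ)

/-- The position `x` lies (weakly) in the cyclic interval from `a` to `b`. -/
def InArc (M a b x : ℕ) : Prop := relM M a x ≤ relM M a b

/-- The cyclic arc `[la, ra]` is strictly nested inside the arc `[lb, rb]`. -/
def NestedIn (M la ra lb rb : ℕ) : Prop :=
  0 < relM M lb la ∧ relM M lb la ≤ relM M lb ra ∧ relM M lb ra ≤ relM M lb rb

/-- The cyclic arcs `[la, ra]` and `[lb, rb]` are disjoint. -/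
def SepArc (M la ra lb rb : ℕ) : Prop :=
  relM M lb rb < relM M lb la ∧ relM M lb la ≤ relM M lb ra

/-- `f` is the parenthesis matching of the cyclic parenthesization of `(L, R)`: it matches
each right parenthesis `r ∈ R` with a left parenthesis `f r ∈ L`, bijectively, and the
resulting arcs (from left to matching right parenthesis, clockwise) are pairwise nested or
disjoint. -/
def IsMatching (n : ℕ) (L R : Finset ℕ) (f : ℕ → ℕ) : Prop :=
  (∀ r ∈ R, f r ∈ L) ∧ (∀ r ∈ R, ∀ r' ∈ R, f r = f r' → r = r') ∧
  (∀ x ∈ L, ∃ r ∈ R, f r = x) ∧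
  (∀ r ∈ R, ∀ r' ∈ R, r ≠ r' →
    NestedIn (3 * (n + 1)) (3 * f r) (3 * r + 2) (3 * f r') (3 * r' + 2) ∨
    NestedIn (3 * (n + 1)) (3 * f r') (3 * r' + 2) (3 * f r) (3 * r + 2) ∨
    SepArc (3 * (n + 1)) (3 * f r) (3 * r + 2) (3 * f r') (3 * r' + 2))

/-- The integers enclosed by the pair of parentheses of `r ∈ R` and by no other matching
pair nested inside it; its cardinality is the *size* of `r`. -/
noncomputable def enclosed (n : ℕ) (R : Finset ℕ) (f : ℕ → ℕ) (r : ℕ) : Finset ℕ :=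
  (gsA n).filter (fun x =>
    InArc (3 * (n + 1)) (3 * f r) (3 * r + 2) (3 * x + 1) ∧
    ∀ r' ∈ R, r' ≠ r →
      NestedIn (3 * (n + 1)) (3 * f r') (3 * r' + 2) (3 * f r) (3 * r + 2) →
      ¬ InArc (3 * (n + 1)) (3 * f r') (3 * r' + 2) (3 * x + 1))

/-- The integers enclosed by no matching pair of parentheses. -/
noncomputable def unenclosed (n : ℕ) (R : Finset ℕ) (f : ℕ → ℕ) : Finset ℕ :=
  (gsA n).filter (fun x =>
    ∀ r ∈ R, ¬ InArc (3 * (n + 1)) (3 * f r) (3 * r + 2) (3 * x + 1))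

/-- The relation `τ(L,R) = (B, π)`: the blocks of `π` are the enclosed sets of the matching
pairs of parentheses of `(L, R)` together with the set `B` of unenclosed integers. -/
def TauRel (n : ℕ) (L R B : Finset ℕ) (π : Finpartition (gsA n)) : Prop :=
  L ⊆ gsA n ∧ R ⊆ gsA n ∧ L.card = R.card ∧
  ∃ f : ℕ → ℕ, IsMatching n L R f ∧ B = unenclosed n R f ∧
    π.parts = insert B (R.image (enclosed n R f))

set_option linter.unusedSectionVars false
set_option maxHeartbeats 1000000
section aux



lemma relM_nonneg {M : ℕ} (hM : 0 < M) (a x : ℕ) : 0 ≤ relM M a x :=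
  Int.emod_nonneg _ (by exact_mod_cast hM.ne')

lemma relM_lt {M : ℕ} (hM : 0 < M) (a x : ℕ) : relM M a x < M :=
  Int.emod_lt_of_pos _ (by exact_mod_cast hM)

lemma relM_self (M a : ℕ) : relM M a a = 0 := by simp [relM]

lemma relM_decomp {M : ℕ} (hM : 0 < M) (p a x : ℕ) :
    relM M a x = relM M p x - relM M p a ∨ relM M a x = relM M p x - relM M p a + M := by
  have h1 : relM M a x = (relM M p x - relM M p a) % M := by
    unfold relM
    have e : (x:ℤ) - a = ((x:ℤ) - p) - ((a:ℤ) - p) := by ring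
    rw [e, Int.sub_emod]
  have h2 : 0 ≤ relM M p x := relM_nonneg hM p x
  have h3 : relM M p x < M := relM_lt hM p x
  have h4 : 0 ≤ relM M p a := relM_nonneg hM p a
  have h5 : relM M p a < M := relM_lt hM p a
  rcases le_or_gt (relM M p a) (relM M p x) with h | h
  · left; rw [h1, Int.emod_eq_of_lt (by omega) (by omega)]
  · right
    have e2 : (relM M p x - relM M p a) % M = (relM M p x - relM M p a + M * 1) % M :=
      (Int.add_mul_emod_self_left ..).symm
    rw [h1, e2, mul_one, Int.emod_eq_of_lt (by omega) (by omega)]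


section cut
variable {M : ℕ} (hM : 0 < M) (p : ℕ)
include hM

lemma cut_inArc_p {a c : ℕ} (h0a : relM M p a ≠ 0) (h0c : relM M p c ≠ 0) :
    ¬ InArc M a c p ↔ relM M p a ≤ relM M p c := by
  unfold InArc
  have d1 := relM_decomp hM p a p
  have d2 := relM_decomp hM p a c
  simp only [relM_self] at d1 d2
  have := relM_nonneg hM p a; have := relM_lt hM p a
  have := relM_nonneg hM p c; have := relM_lt hM p c
  have := relM_nonneg hM a p; have := relM_lt hM a p
  have := relM_nonneg hM a c; have := relM_lt hM a c
  omega

lemma cut_inArc {a c x : ℕ} (h : ¬ InArc M a c p) :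
    InArc M a c x ↔ relM M p a ≤ relM M p x ∧ relM M p x ≤ relM M p c := by
  unfold InArc at *
  have d1 := relM_decomp hM p a p
  have d2 := relM_decomp hM p a c
  have d3 := relM_decomp hM p a x
  simp only [relM_self] at d1 d2 d3
  have := relM_nonneg hM p a; have := relM_lt hM p a
  have := relM_nonneg hM p c; have := relM_lt hM p c
  have := relM_nonneg hM p x; have := relM_lt hM p x
  have := relM_nonneg hM a p; have := relM_lt hM a p
  have := relM_nonneg hM a c; have := relM_lt hM a c
  have := relM_nonneg hM a x; have := relM_lt hM a x
  omega

lemma cut_nested {la ra lb rb : ℕ} (ha : ¬ InArc M la ra p) (hb : ¬ InArc M lb rb p) :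
    NestedIn M la ra lb rb ↔
      relM M p lb < relM M p la ∧ relM M p la ≤ relM M p ra ∧ relM M p ra ≤ relM M p rb := by
  unfold InArc NestedIn at *
  have d1 := relM_decomp hM p la p
  have d2 := relM_decomp hM p la ra
  have d3 := relM_decomp hM p lb p
  have d4 := relM_decomp hM p lb rb
  have d5 := relM_decomp hM p lb la
  have d6 := relM_decomp hM p lb ra
  simp only [relM_self] at d1 d3
  have := relM_nonneg hM p la; have := relM_lt hM p la
  have := relM_nonneg hM p ra; have := relM_lt hM p ra
  have := relM_nonneg hM p lb; have := relM_lt hM p lb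
  have := relM_nonneg hM p rb; have := relM_lt hM p rb
  have := relM_nonneg hM la p; have := relM_lt hM la p
  have := relM_nonneg hM la ra; have := relM_lt hM la ra
  have := relM_nonneg hM lb p; have := relM_lt hM lb p
  have := relM_nonneg hM lb rb; have := relM_lt hM lb rb
  have := relM_nonneg hM lb la; have := relM_lt hM lb la
  have := relM_nonneg hM lb ra; have := relM_lt hM lb ra
  omega

lemma cut_sep {la ra lb rb : ℕ} (ha : ¬ InArc M la ra p) (hb : ¬ InArc M lb rb p) :
    SepArc M la ra lb rb ↔
      relM M p la ≤ relM M p ra ∧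
        (relM M p ra < relM M p lb ∨ relM M p rb < relM M p la) := by
  unfold InArc SepArc at *
  have d1 := relM_decomp hM p la p
  have d2 := relM_decomp hM p la ra
  have d3 := relM_decomp hM p lb p
  have d4 := relM_decomp hM p lb rb
  have d5 := relM_decomp hM p lb la
  have d6 := relM_decomp hM p lb ra
  simp only [relM_self] at d1 d3
  have := relM_nonneg hM p la; have := relM_lt hM p la
  have := relM_nonneg hM p ra; have := relM_lt hM p ra
  have := relM_nonneg hM p lb; have := relM_lt hM p lb
  have := relM_nonneg hM p rb; have := relM_lt hM p rb
  have := relM_nonneg hM la p; have := relM_lt hM la p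
  have := relM_nonneg hM la ra; have := relM_lt hM la ra
  have := relM_nonneg hM lb p; have := relM_lt hM lb p
  have := relM_nonneg hM lb rb; have := relM_lt hM lb rb
  have := relM_nonneg hM lb la; have := relM_lt hM lb la
  have := relM_nonneg hM lb ra; have := relM_lt hM lb ra
  omega

lemma inArc_iff_add {a b c : ℕ} :
    InArc M a c b ↔ relM M a b + relM M b c = relM M a c := by
  unfold InArc
  have d1 := relM_decomp hM a b c
  have := relM_nonneg hM a b; have := relM_lt hM a b
  have := relM_nonneg hM a c; have := relM_lt hM a c
  have := relM_nonneg hM b c; have := relM_lt hM b c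
  omega
end cut


section tokens
variable {n b : ℕ}

/-- cyclic coordinate of the integer `x` relative to base integer `b`. -/
def qc (n b x : ℕ) : ℤ := (((x:ℤ) - b) % ((n:ℤ)+1))

lemma qc_nonneg : 0 ≤ qc n b x := Int.emod_nonneg _ (by positivity)
lemma qc_le : qc n b x ≤ n := by
  have : qc n b x < (n:ℤ)+1 := Int.emod_lt_of_pos _ (by positivity)
  omega

lemma qc_self : qc n b b = 0 := by simp [qc]

lemma qc_inj {x y : ℕ} (hx : x ∈ Finset.Icc 1 n) (hy : y ∈ Finset.Icc 1 n)
    (h : qc n b x = qc n b y) : x = y := by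
  simp only [Finset.mem_Icc] at hx hy
  unfold qc at h
  have h2 : ((x:ℤ) - y) % ((n:ℤ)+1) = 0 := by
    have := Int.sub_emod ((x:ℤ) - b) ((y:ℤ) - b) ((n:ℤ)+1)
    simp only [h, sub_self] at this
    have e : (x:ℤ) - y = ((x:ℤ) - b) - ((y:ℤ) - b) := by ring
    rw [e, this]
    simp
  have := Int.emod_emod_of_dvd ((x:ℤ) - y) (dvd_refl ((n:ℤ)+1))
  have h3 : ((n:ℤ)+1) ∣ ((x:ℤ) - y) := Int.dvd_of_emod_eq_zero h2
  rcases h3 with ⟨k, hk⟩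
  have hx1 : (1:ℤ) ≤ x := by exact_mod_cast hx.1
  have hx2 : (x:ℤ) ≤ n := by exact_mod_cast hx.2
  have hy1 : (1:ℤ) ≤ y := by exact_mod_cast hy.1
  have hy2 : (y:ℤ) ≤ n := by exact_mod_cast hy.2
  have hk0 : k = 0 := by nlinarith
  have : (x:ℤ) = y := by rw [hk0, mul_zero] at hk; omega
  exact_mod_cast this

lemma qc_eq_zero {x : ℕ} (hx : x ∈ Finset.Icc 1 n) (hb : b ∈ Finset.Icc 1 n)
    (h : qc n b x = 0) : x = b := qc_inj hx hb (by rw [h, qc_self])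

lemma emod3 (u v k : ℤ) (hv : 0 < v) (hk : 0 ≤ k) (hk3 : k < 3) :
    (3*u + k) % (3*v) = 3 * (u % v) + k := by
  have h1 : 3*u + k = (3 * (u % v) + k) + (3*v) * (u / v) := by
    have := Int.emod_add_mul_ediv u v; ring_nf; nlinarith [Int.emod_add_mul_ediv u v]
  rw [h1, Int.add_mul_emod_self_left]
  have h2 : 0 ≤ u % v := Int.emod_nonneg _ (by omega)
  have h3 : u % v < v := Int.emod_lt_of_pos _ hv
  exact Int.emod_eq_of_lt (by omega) (by omega)

lemma psi_int (x : ℕ) : relM (3*(n+1)) (3*b+1) (3*x+1) = 3 * qc n b x := by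
  unfold relM qc
  have e : ((3*x+1 : ℕ) : ℤ) - ((3*b+1 : ℕ) : ℤ) = 3*((x:ℤ) - b) + 0 := by push_cast; ring
  have e2 : ((3*(n+1) : ℕ) : ℤ) = 3 * ((n:ℤ)+1) := by push_cast; ring
  rw [e, e2, emod3 _ _ _ (by positivity) le_rfl (by norm_num)]
  ring

lemma psi_right (x : ℕ) : relM (3*(n+1)) (3*b+1) (3*x+2) = 3 * qc n b x + 1 := by
  unfold relM qc
  have e : ((3*x+2 : ℕ) : ℤ) - ((3*b+1 : ℕ) : ℤ) = 3*((x:ℤ) - b) + 1 := by push_cast; ring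
  have e2 : ((3*(n+1) : ℕ) : ℤ) = 3 * ((n:ℤ)+1) := by push_cast; ring
  rw [e, e2, emod3 _ _ _ (by positivity) (by norm_num) (by norm_num)]

lemma psi_left {x : ℕ} (hx : qc n b x ≠ 0) :
    relM (3*(n+1)) (3*b+1) (3*x) = 3 * qc n b x - 1 := by
  unfold relM qc
  have e : ((3*x : ℕ) : ℤ) - ((3*b+1 : ℕ) : ℤ) = 3*(((x:ℤ) - b) - 1) + 2 := by push_cast; ring
  have e2 : ((3*(n+1) : ℕ) : ℤ) = 3 * ((n:ℤ)+1) := by push_cast; ring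
  rw [e, e2, emod3 _ _ _ (by positivity) (by norm_num) (by norm_num)]
  have h1 : (((x:ℤ) - b) - 1) % ((n:ℤ)+1) = (((x:ℤ) - b) % ((n:ℤ)+1)) - 1 := by
    have hq : 0 ≤ ((x:ℤ)-b) % ((n:ℤ)+1) := Int.emod_nonneg _ (by positivity)
    have hq2 : ((x:ℤ)-b) % ((n:ℤ)+1) < (n:ℤ)+1 := Int.emod_lt_of_pos _ (by positivity)
    have e3 : ((x:ℤ) - b) - 1 = (((x:ℤ)-b) % ((n:ℤ)+1) - 1) + ((n:ℤ)+1) * (((x:ℤ)-b)/((n:ℤ)+1)) := by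
      nlinarith [Int.emod_add_mul_ediv ((x:ℤ)-b) ((n:ℤ)+1)]
    rw [e3, Int.add_mul_emod_self_left]
    unfold qc at hx
    exact Int.emod_eq_of_lt (by omega) (by omega)
  rw [h1]; ring
end tokens


lemma qc_cases {n b x : ℕ} (hx : x ∈ Finset.Icc 1 n) (hb : b ∈ Finset.Icc 1 n) :
    (b ≤ x ∧ qc n b x = (x:ℤ) - b) ∨ (x < b ∧ qc n b x = (x:ℤ) - b + (n+1)) := by
  simp only [Finset.mem_Icc] at hx hb
  rcases le_or_gt b x with h | h
  · left
    refine ⟨h, ?_⟩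
    unfold qc
    exact Int.emod_eq_of_lt (by omega) (by omega)
  · right
    refine ⟨h, ?_⟩
    unfold qc
    have e : (x:ℤ) - b = ((x:ℤ) - b + (n+1)) + ((n:ℤ)+1) * (-1) := by ring
    conv_lhs => rw [e, Int.add_mul_emod_self_left]
    exact Int.emod_eq_of_lt (by omega) (by omega)

lemma rot_fwd {n b a₁ a₂ a₃ a₄ : ℕ} (h1 : a₁ ∈ Finset.Icc 1 n) (h2 : a₂ ∈ Finset.Icc 1 n)
    (h3 : a₃ ∈ Finset.Icc 1 n) (h4 : a₄ ∈ Finset.Icc 1 n) (hb : b ∈ Finset.Icc 1 n)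
    (o1 : a₁ < a₂) (o2 : a₂ < a₃) (o3 : a₃ < a₄) :
    (qc n b a₁ < qc n b a₂ ∧ qc n b a₂ < qc n b a₃ ∧ qc n b a₃ < qc n b a₄) ∨
    (qc n b a₂ < qc n b a₃ ∧ qc n b a₃ < qc n b a₄ ∧ qc n b a₄ < qc n b a₁) ∨
    (qc n b a₃ < qc n b a₄ ∧ qc n b a₄ < qc n b a₁ ∧ qc n b a₁ < qc n b a₂) ∨
    (qc n b a₄ < qc n b a₁ ∧ qc n b a₁ < qc n b a₂ ∧ qc n b a₂ < qc n b a₃) := by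
  have c1 := qc_cases h1 hb
  have c2 := qc_cases h2 hb
  have c3 := qc_cases h3 hb
  have c4 := qc_cases h4 hb
  simp only [Finset.mem_Icc] at h1 h2 h3 h4 hb
  omega

lemma rot_bwd {n b a₁ a₂ a₃ a₄ : ℕ} (h1 : a₁ ∈ Finset.Icc 1 n) (h2 : a₂ ∈ Finset.Icc 1 n)
    (h3 : a₃ ∈ Finset.Icc 1 n) (h4 : a₄ ∈ Finset.Icc 1 n) (hb : b ∈ Finset.Icc 1 n)
    (o1 : qc n b a₁ < qc n b a₂) (o2 : qc n b a₂ < qc n b a₃) (o3 : qc n b a₃ < qc n b a₄) :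
    (a₁ < a₂ ∧ a₂ < a₃ ∧ a₃ < a₄) ∨ (a₂ < a₃ ∧ a₃ < a₄ ∧ a₄ < a₁) ∨
    (a₃ < a₄ ∧ a₄ < a₁ ∧ a₁ < a₂) ∨ (a₄ < a₁ ∧ a₁ < a₂ ∧ a₂ < a₃) := by
  have c1 := qc_cases h1 hb
  have c2 := qc_cases h2 hb
  have c3 := qc_cases h3 hb
  have c4 := qc_cases h4 hb
  simp only [Finset.mem_Icc] at h1 h2 h3 h4 hb
  omega


section lin
variable {n : ℕ} {L R : Finset ℕ} {f : ℕ → ℕ} {b : ℕ}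

lemma hM3 (n : ℕ) : 0 < 3*(n+1) := by positivity

/-- the cut property relative to the integer `b`. -/
def IsCut (n : ℕ) (R : Finset ℕ) (f : ℕ → ℕ) (b : ℕ) : Prop :=
  b ∈ gsA n ∧ ∀ r ∈ R, ¬ InArc (3*(n+1)) (3 * f r) (3*r+2) (3*b+1)

lemma qfr_ne (hL : L ⊆ gsA n) (hm : IsMatching n L R f) (hc : IsCut n R f b)
    {r : ℕ} (hr : r ∈ R) : qc n b (f r) ≠ 0 := by
  intro h0
  obtain ⟨hb, hcut⟩ := hc
  have hfr : f r ∈ gsA n := hL (hm.1 r hr)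
  have hfb : f r = b := qc_eq_zero hfr hb h0
  apply hcut r hr
  unfold InArc
  have hp1 : relM (3*(n+1)) (3 * f r) (3*b+1) = 1 := by
    rcases relM_decomp (hM3 n) (3*b+1) (3 * f r) (3*b+1) with h | h <;>
    · rw [relM_self] at h
      have e1 : relM (3*(n+1)) (3*b+1) (3 * f r) = 3*(n+1) - 1 := by
        rw [hfb]
        unfold relM
        have e : ((3*b : ℕ) : ℤ) - ((3*b+1 : ℕ) : ℤ) = -1 := by push_cast; ring
        rw [e]
        have e2 : (-1 : ℤ) = (((3*(n+1):ℕ):ℤ) - 1) + ((3*(n+1):ℕ):ℤ) * (-1) := by push_cast; ring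
        conv_lhs => rw [e2, Int.add_mul_emod_self_left]
        refine Int.emod_eq_of_lt (by push_cast; omega) (by omega)
      rw [e1] at h
      have := relM_nonneg (hM3 n) (3 * f r) (3*b+1)
      have := relM_lt (hM3 n) (3 * f r) (3*b+1)
      push_cast at *
      omega
  rw [hp1]
  have h2 := relM_nonneg (hM3 n) (3 * f r) (3*r+2)
  rcases relM_decomp (hM3 n) (3*b+1) (3 * f r) (3*r+2) with h | h <;>
  · rw [psi_right] at h
    have e1 : relM (3*(n+1)) (3*b+1) (3 * f r) = 3*(n+1) - 1 := by
      rw [hfb]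
      unfold relM
      have e : ((3*b : ℕ) : ℤ) - ((3*b+1 : ℕ) : ℤ) = -1 := by push_cast; ring
      rw [e]
      have e2 : (-1 : ℤ) = (((3*(n+1):ℕ):ℤ) - 1) + ((3*(n+1):ℕ):ℤ) * (-1) := by push_cast; ring
      conv_lhs => rw [e2, Int.add_mul_emod_self_left]
      refine Int.emod_eq_of_lt (by push_cast; omega) (by omega)
    rw [e1] at h
    have hq1 : 0 ≤ qc n b r := qc_nonneg
    have hq2 : qc n b r ≤ n := qc_le
    push_cast at *
    omega

lemma qr_ne (hL : L ⊆ gsA n) (hm : IsMatching n L R f) (hc : IsCut n R f b)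
    {r : ℕ} (hr : r ∈ R) : qc n b r ≠ 0 := by
  intro h0
  have hqf := qfr_ne hL hm hc hr
  obtain ⟨hb, hcut⟩ := hc
  apply hcut r hr
  unfold InArc
  have hsl : relM (3*(n+1)) (3*b+1) (3 * f r) = 3 * qc n b (f r) - 1 := psi_left hqf
  have her : relM (3*(n+1)) (3*b+1) (3*r+2) = 3 * qc n b r + 1 := psi_right r
  rw [h0] at her
  have hq1 : 0 ≤ qc n b (f r) := qc_nonneg
  have hq2 : qc n b (f r) ≤ n := qc_le
  have d1 := relM_decomp (hM3 n) (3*b+1) (3 * f r) (3*b+1)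
  have d2 := relM_decomp (hM3 n) (3*b+1) (3 * f r) (3*r+2)
  rw [relM_self, hsl] at d1
  rw [hsl, her] at d2
  have := relM_nonneg (hM3 n) (3 * f r) (3*b+1)
  have := relM_lt (hM3 n) (3 * f r) (3*b+1)
  have := relM_nonneg (hM3 n) (3 * f r) (3*r+2)
  have := relM_lt (hM3 n) (3 * f r) (3*r+2)
  push_cast at *
  omega

/-- left endpoint coordinate. -/
lemma psi_s (hL : L ⊆ gsA n) (hm : IsMatching n L R f) (hc : IsCut n R f b)
    {r : ℕ} (hr : r ∈ R) :
    relM (3*(n+1)) (3*b+1) (3 * f r) = 3 * qc n b (f r) - 1 :=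
  psi_left (qfr_ne hL hm hc hr)

lemma qf_le_q (hL : L ⊆ gsA n) (hm : IsMatching n L R f) (hc : IsCut n R f b)
    {r : ℕ} (hr : r ∈ R) : qc n b (f r) ≤ qc n b r := by
  have h := (cut_inArc_p (hM3 n) (3*b+1)
      (a := 3 * f r) (c := 3*r+2) ?_ ?_).mp (hc.2 r hr)
  · rw [psi_s hL hm hc hr, psi_right] at h
    omega
  · rw [psi_s hL hm hc hr]
    have := qfr_ne hL hm hc hr
    have : 0 ≤ qc n b (f r) := qc_nonneg
    omega
  · rw [psi_right]
    have : 0 ≤ qc n b r := qc_nonneg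
    omega

lemma mem_arc_iff (hL : L ⊆ gsA n) (hm : IsMatching n L R f) (hc : IsCut n R f b)
    {r : ℕ} (hr : r ∈ R) (x : ℕ) :
    InArc (3*(n+1)) (3 * f r) (3*r+2) (3*x+1) ↔
      qc n b (f r) ≤ qc n b x ∧ qc n b x ≤ qc n b r := by
  rw [cut_inArc (hM3 n) (3*b+1) (hc.2 r hr), psi_s hL hm hc hr, psi_right, psi_int]
  constructor
  · rintro ⟨h1, h2⟩; omega
  · rintro ⟨h1, h2⟩; omega

lemma nested_iff (hL : L ⊆ gsA n) (hm : IsMatching n L R f) (hc : IsCut n R f b)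
    {r r' : ℕ} (hr : r ∈ R) (hr' : r' ∈ R) :
    NestedIn (3*(n+1)) (3 * f r') (3*r'+2) (3 * f r) (3*r+2) ↔
      qc n b (f r) < qc n b (f r') ∧ qc n b r' ≤ qc n b r := by
  rw [cut_nested (hM3 n) (3*b+1) (hc.2 r' hr') (hc.2 r hr),
    psi_s hL hm hc hr, psi_s hL hm hc hr', psi_right, psi_right]
  have := qf_le_q hL hm hc hr'
  constructor
  · rintro ⟨h1, h2, h3⟩; constructor <;> omega
  · rintro ⟨h1, h2⟩; refine ⟨by omega, by omega, by omega⟩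

lemma sep_iff (hL : L ⊆ gsA n) (hm : IsMatching n L R f) (hc : IsCut n R f b)
    {r r' : ℕ} (hr : r ∈ R) (hr' : r' ∈ R) :
    SepArc (3*(n+1)) (3 * f r') (3*r'+2) (3 * f r) (3*r+2) ↔
      qc n b r' < qc n b (f r) ∨ qc n b r < qc n b (f r') := by
  rw [cut_sep (hM3 n) (3*b+1) (hc.2 r' hr') (hc.2 r hr),
    psi_s hL hm hc hr, psi_s hL hm hc hr', psi_right, psi_right]
  have := qf_le_q hL hm hc hr'
  constructor
  · rintro ⟨h1, h2⟩; rcases h2 with h2 | h2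
    · left; omega
    · right; omega
  · intro h; refine ⟨by omega, ?_⟩
    rcases h with h | h
    · left; omega
    · right; omega

/-- linear trichotomy for two distinct arcs. -/
lemma tri (hL : L ⊆ gsA n) (hm : IsMatching n L R f) (hc : IsCut n R f b)
    {r r' : ℕ} (hr : r ∈ R) (hr' : r' ∈ R) (hne : r ≠ r') :
    (qc n b (f r) < qc n b (f r') ∧ qc n b r' ≤ qc n b r) ∨
    (qc n b (f r') < qc n b (f r) ∧ qc n b r ≤ qc n b r') ∨
    (qc n b r' < qc n b (f r) ∨ qc n b r < qc n b (f r')) := by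
  rcases hm.2.2.2 r hr r' hr' hne with h | h | h
  · right; left
    rwa [nested_iff hL hm hc hr' hr] at h
  · left
    rwa [nested_iff hL hm hc hr hr'] at h
  · right; right
    rw [sep_iff hL hm hc hr' hr] at h
    tauto

end lin
section chunk2
open Finset
variable {n : ℕ} {L R : Finset ℕ} {f : ℕ → ℕ} {b : ℕ}
variable (hL : L ⊆ gsA n) (hR : R ⊆ gsA n) (hm : IsMatching n L R f) (hc : IsCut n R f b)
include hL hR hm hc

lemma mem_enclosed_iff {r x : ℕ} (hr : r ∈ R) :
    x ∈ enclosed n R f r ↔ x ∈ gsA n ∧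
      (qc n b (f r) ≤ qc n b x ∧ qc n b x ≤ qc n b r) ∧
      ∀ r' ∈ R, r' ≠ r → (qc n b (f r) < qc n b (f r') ∧ qc n b r' ≤ qc n b r) →
        ¬ (qc n b (f r') ≤ qc n b x ∧ qc n b x ≤ qc n b r') := by
  unfold enclosed
  rw [mem_filter]
  constructor
  · rintro ⟨hx, h1, h2⟩
    refine ⟨hx, (mem_arc_iff hL hm hc hr x).mp h1, ?_⟩
    intro r' hr' hne hn
    rw [← mem_arc_iff hL hm hc hr' x]
    exact h2 r' hr' hne ((nested_iff hL hm hc hr hr').mpr hn)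
  · rintro ⟨hx, h1, h2⟩
    refine ⟨hx, (mem_arc_iff hL hm hc hr x).mpr h1, ?_⟩
    intro r' hr' hne hn
    rw [mem_arc_iff hL hm hc hr' x]
    exact h2 r' hr' hne ((nested_iff hL hm hc hr hr').mp hn)

lemma mem_unenclosed_iff {x : ℕ} :
    x ∈ unenclosed n R f ↔ x ∈ gsA n ∧
      ∀ r ∈ R, ¬ (qc n b (f r) ≤ qc n b x ∧ qc n b x ≤ qc n b r) := by
  unfold unenclosed
  rw [mem_filter]
  constructor
  · rintro ⟨hx, h1⟩
    exact ⟨hx, fun r hr => by rw [← mem_arc_iff hL hm hc hr x]; exact h1 r hr⟩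
  · rintro ⟨hx, h1⟩
    exact ⟨hx, fun r hr => by rw [mem_arc_iff hL hm hc hr x]; exact h1 r hr⟩

lemma fr_mem_enclosed {r : ℕ} (hr : r ∈ R) : f r ∈ enclosed n R f r := by
  rw [mem_enclosed_iff hL hR hm hc hr]
  refine ⟨hL (hm.1 r hr), ⟨le_refl _, qf_le_q hL hm hc hr⟩, ?_⟩
  rintro r' hr' hne ⟨hn1, hn2⟩ ⟨h1, h2⟩
  omega

lemma r_mem_enclosed {r : ℕ} (hr : r ∈ R) : r ∈ enclosed n R f r := by
  rw [mem_enclosed_iff hL hR hm hc hr]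
  refine ⟨hR hr, ⟨qf_le_q hL hm hc hr, le_refl _⟩, ?_⟩
  rintro r' hr' hne ⟨hn1, hn2⟩ ⟨h1, h2⟩
  have : qc n b r' = qc n b r := le_antisymm hn2 h2
  exact hne (qc_inj (hR hr') (hR hr) this)

lemma enclosed_pair_disj {r r' : ℕ} (hr : r ∈ R) (hr' : r' ∈ R) (hne : r ≠ r')
    {x : ℕ} (h1 : x ∈ enclosed n R f r) (h2 : x ∈ enclosed n R f r') : False := by
  rw [mem_enclosed_iff hL hR hm hc hr] at h1
  rw [mem_enclosed_iff hL hR hm hc hr'] at h2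
  obtain ⟨hx, ⟨a1, a2⟩, hcl⟩ := h1
  obtain ⟨_, ⟨b1, b2⟩, hcl'⟩ := h2
  rcases tri hL hm hc hr hr' hne with ⟨t1, t2⟩ | ⟨t1, t2⟩ | t | t
  · exact hcl r' hr' (Ne.symm hne) ⟨t1, t2⟩ ⟨b1, b2⟩
  · exact hcl' r hr hne ⟨t1, t2⟩ ⟨a1, a2⟩
  · omega
  · omega

lemma unenclosed_enclosed_disj {r : ℕ} (hr : r ∈ R) {x : ℕ}
    (h1 : x ∈ unenclosed n R f) (h2 : x ∈ enclosed n R f r) : False := by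
  rw [mem_unenclosed_iff hL hR hm hc] at h1
  rw [mem_enclosed_iff hL hR hm hc hr] at h2
  exact h1.2 r hr h2.2.1

lemma cover {x : ℕ} (hx : x ∈ gsA n) :
    x ∈ unenclosed n R f ∨ ∃ r ∈ R, x ∈ enclosed n R f r := by
  by_cases h : ∀ r ∈ R, ¬ (qc n b (f r) ≤ qc n b x ∧ qc n b x ≤ qc n b r)
  · left; exact (mem_unenclosed_iff hL hR hm hc).mpr ⟨hx, h⟩
  · right
    push_neg at h
    obtain ⟨r₀, hr₀, hin₀⟩ := h
    set T := R.filter (fun r => qc n b (f r) ≤ qc n b x ∧ qc n b x ≤ qc n b r) with hT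
    have hTne : T.Nonempty := ⟨r₀, by simp [hT, hr₀, hin₀.1, hin₀.2]⟩
    obtain ⟨r, hrT, hmin⟩ := T.exists_min_image (fun r => qc n b r - qc n b (f r)) hTne
    rw [hT, mem_filter] at hrT
    refine ⟨r, hrT.1, ?_⟩
    rw [mem_enclosed_iff hL hR hm hc hrT.1]
    refine ⟨hx, hrT.2, ?_⟩
    rintro r' hr' hne ⟨hn1, hn2⟩ ⟨h1, h2⟩
    have hr'T : r' ∈ T := by rw [hT, mem_filter]; exact ⟨hr', h1, h2⟩
    have := hmin r' hr'T
    omega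

lemma core_cross {X Y : Finset ℕ}
    (hX : X = unenclosed n R f ∨ ∃ r ∈ R, X = enclosed n R f r)
    (hY : Y = unenclosed n R f ∨ ∃ r ∈ R, Y = enclosed n R f r)
    (hXY : X ≠ Y) {x1 y1 x2 y2 : ℕ}
    (hx1 : x1 ∈ X) (hy1 : y1 ∈ Y) (hx2 : x2 ∈ X) (hy2 : y2 ∈ Y)
    (o1 : qc n b x1 < qc n b y1) (o2 : qc n b y1 < qc n b x2)
    (o3 : qc n b x2 < qc n b y2) : False := by
  rcases hX with hX | ⟨r, hr, hX⟩ <;> rcases hY with hY | ⟨r', hr', hY⟩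
  · exact hXY (hX.trans hY.symm)
  · subst hX hY
    have h1 := ((mem_enclosed_iff hL hR hm hc hr').mp hy1).2.1
    have h2 := ((mem_enclosed_iff hL hR hm hc hr').mp hy2).2.1
    have h3 := (mem_unenclosed_iff hL hR hm hc).mp hx2
    exact h3.2 r' hr' ⟨by omega, by omega⟩
  · subst hX hY
    have h1 := ((mem_enclosed_iff hL hR hm hc hr).mp hx1).2.1
    have h2 := ((mem_enclosed_iff hL hR hm hc hr).mp hx2).2.1
    have h3 := (mem_unenclosed_iff hL hR hm hc).mp hy1
    exact h3.2 r hr ⟨by omega, by omega⟩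
  · subst hX hY
    have hne : r ≠ r' := fun h => hXY (by rw [h])
    have a1 := ((mem_enclosed_iff hL hR hm hc hr).mp hx1).2.1
    have a2 := ((mem_enclosed_iff hL hR hm hc hr).mp hx2)
    have b1 := ((mem_enclosed_iff hL hR hm hc hr').mp hy1)
    have b2 := ((mem_enclosed_iff hL hR hm hc hr').mp hy2).2.1
    rcases tri hL hm hc hr hr' hne with ⟨t1, t2⟩ | ⟨t1, t2⟩ | t | t
    · exact a2.2.2 r' hr' (Ne.symm hne) ⟨t1, t2⟩ ⟨by omega, by omega⟩
    · exact b1.2.2 r hr hne ⟨t1, t2⟩ ⟨by omega, by omega⟩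
    · have := a2.2.1; have := b1.2.1; omega
    · have := a2.2.1; have := b1.2.1; omega

end chunk2
section chunk3
open Finset
set_option linter.unusedSectionVars false
variable {n : ℕ} {L R : Finset ℕ} {f : ℕ → ℕ} {b : ℕ}
variable (hL : L ⊆ gsA n) (hR : R ⊆ gsA n) (hm : IsMatching n L R f) (hc : IsCut n R f b)
include hL hR hm hc

lemma parts_pd :
    (↑(insert (unenclosed n R f) (R.image (enclosed n R f))) : Set (Finset ℕ)).PairwiseDisjoint id := by
  intro X hX Y hY hne
  simp only [coe_insert, Set.mem_insert_iff, coe_image, Set.mem_image, mem_coe] at hX hY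
  have key : ∀ Z W : Finset ℕ,
      (Z = unenclosed n R f ∨ ∃ r ∈ R, Z = enclosed n R f r) →
      (W = unenclosed n R f ∨ ∃ r ∈ R, W = enclosed n R f r) → Z ≠ W →
      _root_.Disjoint Z W := by
    intro Z W hZ hW hZW
    rw [Finset.disjoint_left]
    intro x hxZ hxW
    rcases hZ with hZ | ⟨r, hr, hZ⟩ <;> rcases hW with hW | ⟨r', hr', hW⟩
    · exact hZW (hZ.trans hW.symm)
    · exact unenclosed_enclosed_disj hL hR hm hc hr' (hZ ▸ hxZ) (hW ▸ hxW)
    · exact unenclosed_enclosed_disj hL hR hm hc hr (hW ▸ hxW) (hZ ▸ hxZ)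
    · have hrr : r ≠ r' := fun h => hZW (by rw [hZ, hW, h])
      exact enclosed_pair_disj hL hR hm hc hr hr' hrr (hZ ▸ hxZ) (hW ▸ hxW)
  apply key
  · rcases hX with h | ⟨r, hr, h⟩
    · left; exact h
    · right; exact ⟨r, hr, h.symm⟩
  · rcases hY with h | ⟨r, hr, h⟩
    · left; exact h
    · right; exact ⟨r, hr, h.symm⟩
  · exact hne

lemma parts_sup :
    (insert (unenclosed n R f) (R.image (enclosed n R f))).sup id = gsA n := by
  apply le_antisymm
  · apply Finset.sup_le
    intro X hX
    rcases mem_insert.mp hX with h | h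
    · subst h; exact filter_subset _ _
    · obtain ⟨r, _, rfl⟩ := mem_image.mp h
      exact filter_subset _ _
  · intro x hx
    rw [Finset.mem_sup]
    rcases cover hL hR hm hc hx with h | ⟨r, hr, h⟩
    · exact ⟨unenclosed n R f, mem_insert_self _ _, h⟩
    · exact ⟨enclosed n R f r, mem_insert_of_mem (mem_image_of_mem _ hr), h⟩

lemma parts_nobot (hU : (unenclosed n R f).Nonempty) :
    ⊥ ∉ insert (unenclosed n R f) (R.image (enclosed n R f)) := by
  intro h
  rcases mem_insert.mp h with h | h
  · rw [← h] at hU; simp [Finset.bot_eq_empty] at hU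
  · obtain ⟨r, hr, hE⟩ := mem_image.mp h
    have := fr_mem_enclosed hL hR hm hc hr
    rw [hE] at this
    simp [Finset.bot_eq_empty] at this

/-- the partition produced by `τ`. -/
noncomputable def tauPart (hL : L ⊆ gsA n) (hR : R ⊆ gsA n) (hm : IsMatching n L R f)
    (hc : IsCut n R f b) (hU : (unenclosed n R f).Nonempty) : Finpartition (gsA n) where
  parts := insert (unenclosed n R f) (R.image (enclosed n R f))
  supIndep := (Finset.supIndep_iff_pairwiseDisjoint).mpr (parts_pd hL hR hm hc)
  sup_parts := parts_sup hL hR hm hc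
  bot_notMem := parts_nobot hL hR hm hc hU

lemma tauPart_nc (hU : (unenclosed n R f).Nonempty) :
    IsNoncrossing (tauPart hL hR hm hc hU) := by
  intro a c d e hac hcd hde h1 h2
  obtain ⟨X, hX, haX, hdX⟩ := h1
  obtain ⟨Y, hY, hcY, heY⟩ := h2
  by_cases hXY : X = Y
  · exact ⟨X, hX, haX, hXY ▸ hcY⟩
  · exfalso
    have hXd : X = unenclosed n R f ∨ ∃ r ∈ R, X = enclosed n R f r := by
      rcases mem_insert.mp hX with h | h
      · left; exact h
      · right; obtain ⟨r, hr, hE⟩ := mem_image.mp h; exact ⟨r, hr, hE.symm⟩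
    have hYd : Y = unenclosed n R f ∨ ∃ r ∈ R, Y = enclosed n R f r := by
      rcases mem_insert.mp hY with h | h
      · left; exact h
      · right; obtain ⟨r, hr, hE⟩ := mem_image.mp h; exact ⟨r, hr, hE.symm⟩
    have hsub : ∀ Z : Finset ℕ,
        (Z = unenclosed n R f ∨ ∃ r ∈ R, Z = enclosed n R f r) → Z ⊆ gsA n := by
      rintro Z (rfl | ⟨r, hr, rfl⟩) <;> exact filter_subset _ _
    have ha : a ∈ gsA n := hsub X hXd haX
    have hd : d ∈ gsA n := hsub X hXd hdX
    have hcc : c ∈ gsA n := hsub Y hYd hcY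
    have he : e ∈ gsA n := hsub Y hYd heY
    rcases rot_fwd ha hcc hd he hc.1 hac hcd hde with ⟨o1, o2, o3⟩ | ⟨o1, o2, o3⟩ |
      ⟨o1, o2, o3⟩ | ⟨o1, o2, o3⟩
    · exact core_cross hL hR hm hc hXd hYd hXY haX hcY hdX heY o1 o2 o3
    · exact core_cross hL hR hm hc hYd hXd (Ne.symm hXY) hcY hdX heY haX o1 o2 o3
    · exact core_cross hL hR hm hc hXd hYd hXY hdX heY haX hcY o1 o2 o3
    · exact core_cross hL hR hm hc hYd hXd (Ne.symm hXY) heY haX hcY hdX o1 o2 o3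

lemma enclosed_nonempty {r : ℕ} (hr : r ∈ R) : (enclosed n R f r).Nonempty :=
  ⟨f r, fr_mem_enclosed hL hR hm hc hr⟩

lemma enclosed_ne_unenclosed {r : ℕ} (hr : r ∈ R) : unenclosed n R f ≠ enclosed n R f r := by
  intro h
  exact unenclosed_enclosed_disj hL hR hm hc hr (h ▸ fr_mem_enclosed hL hR hm hc hr)
    (fr_mem_enclosed hL hR hm hc hr)

lemma enclosed_injOn : Set.InjOn (enclosed n R f) R := by
  intro r hr r' hr' h
  by_contra hne
  exact enclosed_pair_disj hL hR hm hc hr hr' hne (fr_mem_enclosed hL hR hm hc hr)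
    (h ▸ fr_mem_enclosed hL hR hm hc hr)

/-- Part 3: the counting statement. -/
lemma counting (hU : (unenclosed n R f).Nonempty) (i : ℕ) :
    (R.filter (fun r => (enclosed n R f r).card = i)).card +
      (if (unenclosed n R f).card = i then 1 else 0) =
    ((insert (unenclosed n R f) (R.image (enclosed n R f))).filter
      (fun A => A.card = i)).card := by
  classical
  have hBnotmem : unenclosed n R f ∉ R.image (enclosed n R f) := by
    intro h
    obtain ⟨r, hr, hE⟩ := mem_image.mp h
    exact enclosed_ne_unenclosed hL hR hm hc hr hE.symm
  rw [filter_insert]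
  have himg : (R.image (enclosed n R f)).filter (fun A => A.card = i) =
      (R.filter (fun r => (enclosed n R f r).card = i)).image (enclosed n R f) := by
    rw [Finset.filter_image]
  by_cases hBc : (unenclosed n R f).card = i
  · rw [if_pos hBc, if_pos hBc]
    rw [Finset.card_insert_of_notMem, himg,
      Finset.card_image_of_injOn ((enclosed_injOn hL hR hm hc).mono (filter_subset _ _))]
    exact fun h => hBnotmem (filter_subset _ _ h)
  · rw [if_neg hBc, if_neg hBc, himg,
      Finset.card_image_of_injOn ((enclosed_injOn hL hR hm hc).mono (filter_subset _ _))]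
    omega
end chunk3
section chunk4
open Finset
set_option linter.unusedSectionVars false

lemma notInArc_add {M : ℕ} (hM : 0 < M) {a b c : ℕ} (h : ¬ InArc M a c b) :
    relM M a b + relM M b c = relM M a c + M := by
  unfold InArc at h
  have d1 := relM_decomp hM a b c
  have := relM_nonneg hM a b; have := relM_lt hM a b
  have := relM_nonneg hM a c; have := relM_lt hM a c
  have := relM_nonneg hM b c; have := relM_lt hM b c
  omega

variable {n : ℕ} {L R : Finset ℕ} {f : ℕ → ℕ}

/-- `M` times the number of arcs covering the integer `x`. -/
lemma cov_formula (hm : IsMatching n L R f) (x : ℕ) :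
    (3*(n+1) : ℤ) * ((R.filter (fun r => InArc (3*(n+1)) (3 * f r) (3*r+2) (3*x+1))).card : ℤ) =
      ∑ r ∈ R, ((3*(n+1) : ℤ) - relM (3*(n+1)) (3 * f r) (3*x+1)
        - relM (3*(n+1)) (3*x+1) (3*r+2) + relM (3*(n+1)) (3 * f r) (3*r+2)) := by
  classical
  rw [Finset.card_filter]
  push_cast
  rw [Finset.mul_sum]
  apply Finset.sum_congr rfl
  intro r hr
  by_cases h : InArc (3*(n+1)) (3 * f r) (3*r+2) (3*x+1)
  · rw [if_pos h]
    have := (inArc_iff_add (hM3 n) (a := 3 * f r) (b := 3*x+1) (c := 3*r+2)).mp h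
    push_cast at this ⊢
    omega
  · rw [if_neg h]
    have := notInArc_add (hM3 n) h
    push_cast at this ⊢
    omega

lemma cov_diff (hm : IsMatching n L R f) (x y : ℕ) :
    (3*(n+1) : ℤ) * ((R.filter (fun r => InArc (3*(n+1)) (3 * f r) (3*r+2) (3*x+1))).card : ℤ)
    - (3*(n+1) : ℤ) * ((R.filter (fun r => InArc (3*(n+1)) (3 * f r) (3*r+2) (3*y+1))).card : ℤ)
    = (∑ l ∈ L, (relM (3*(n+1)) (3*l) (3*y+1) - relM (3*(n+1)) (3*l) (3*x+1)))
      + ∑ r ∈ R, (relM (3*(n+1)) (3*y+1) (3*r+2) - relM (3*(n+1)) (3*x+1) (3*r+2)) := by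
  rw [cov_formula hm x, cov_formula hm y]
  have hbij : ∀ g : ℕ → ℤ, ∑ r ∈ R, g (f r) = ∑ l ∈ L, g l := by
    intro g
    apply Finset.sum_bij (i := fun r _ => f r)
    · exact fun r hr => hm.1 r hr
    · exact fun r hr r' hr' h => hm.2.1 r hr r' hr' h
    · exact fun l hl => by obtain ⟨r, hr, hfr⟩ := hm.2.2.1 l hl; exact ⟨r, hr, hfr⟩
    · intro r hr; rfl
  rw [← hbij (fun l => relM (3*(n+1)) (3*l) (3*y+1) - relM (3*(n+1)) (3*l) (3*x+1)),
    ← Finset.sum_sub_distrib, ← Finset.sum_add_distrib]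
  apply Finset.sum_congr rfl
  intro r hr
  ring

lemma unenclosed_mem_iff_cov {x : ℕ} :
    x ∈ unenclosed n R f ↔ x ∈ gsA n ∧
      (R.filter (fun r => InArc (3*(n+1)) (3 * f r) (3*r+2) (3*x+1))).card = 0 := by
  unfold unenclosed
  rw [mem_filter, Finset.card_eq_zero, Finset.filter_eq_empty_iff]

/-- two matchings of the same `(L,R)`, both with nonempty unenclosed set, have the same
unenclosed set. -/
lemma unenclosed_eq {f' : ℕ → ℕ} (hm : IsMatching n L R f) (hm' : IsMatching n L R f')
    (hU : (unenclosed n R f).Nonempty) (hU' : (unenclosed n R f').Nonempty) :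
    unenclosed n R f = unenclosed n R f' := by
  classical
  obtain ⟨u, hu⟩ := hU
  obtain ⟨u', hu'⟩ := hU'
  set c : ℕ → ℤ := fun x =>
    ((R.filter (fun r => InArc (3*(n+1)) (3 * f r) (3*r+2) (3*x+1))).card : ℤ) with hcdef
  set c' : ℕ → ℤ := fun x =>
    ((R.filter (fun r => InArc (3*(n+1)) (3 * f' r) (3*r+2) (3*x+1))).card : ℤ) with hc'def
  have hcu : c u = 0 := by
    have h0 : (R.filter (fun r => InArc (3*(n+1)) (3 * f r) (3*r+2) (3*u+1))) = ∅ :=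
      Finset.filter_eq_empty_iff.mpr ((mem_filter.mp hu).2)
    simp only [hcdef, h0, Finset.card_empty, Nat.cast_zero]
  have hcu' : c' u' = 0 := by
    have h0 : (R.filter (fun r => InArc (3*(n+1)) (3 * f' r) (3*r+2) (3*u'+1))) = ∅ :=
      Finset.filter_eq_empty_iff.mpr ((mem_filter.mp hu').2)
    simp only [hc'def, h0, Finset.card_empty, Nat.cast_zero]
  have key : ∀ x y : ℕ, (3*(n+1):ℤ) * c x - (3*(n+1):ℤ) * c y
      = (3*(n+1):ℤ) * c' x - (3*(n+1):ℤ) * c' y := by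
    intro x y
    rw [hcdef, hc'def]
    rw [cov_diff hm x y, cov_diff hm' x y]
  have hnonneg : ∀ x, 0 ≤ c x ∧ 0 ≤ c' x := by
    intro x
    constructor <;> · simp [hcdef, hc'def]
  -- show c u' = 0 and c' u = 0
  have h1 := key u' u
  rw [hcu, hcu'] at h1
  have hM : (0:ℤ) < 3*(n+1) := by positivity
  have hMne : (3*((n:ℤ)+1)) ≠ 0 := by positivity
  have hmul1 : (3*((n:ℤ)+1)) * c u' = 0 := by
    nlinarith [mul_nonneg hM.le (hnonneg u').1, mul_nonneg hM.le (hnonneg u).2]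
  have hmul2 : (3*((n:ℤ)+1)) * c' u = 0 := by
    nlinarith [mul_nonneg hM.le (hnonneg u').1, mul_nonneg hM.le (hnonneg u).2]
  have e2 : c' u = 0 := (mul_eq_zero.mp hmul2).resolve_left hMne
  have hall : ∀ x, c x = c' x := by
    intro x
    have h2 := key x u
    rw [hcu, e2] at h2
    have hmm : (3*((n:ℤ)+1)) * c x = (3*((n:ℤ)+1)) * c' x := by linarith
    exact mul_left_cancel₀ hMne hmm
  ext x
  rw [unenclosed_mem_iff_cov, unenclosed_mem_iff_cov]
  have := hall x
  constructor
  · rintro ⟨h3, h4⟩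
    refine ⟨h3, ?_⟩
    simp only [hcdef, hc'def] at this
    omega
  · rintro ⟨h3, h4⟩
    refine ⟨h3, ?_⟩
    simp only [hcdef, hc'def] at this
    omega
end chunk4
section chunk5
open Finset
set_option linter.unusedSectionVars false
variable {n : ℕ}

/-- key step: no arc has its left endpoint strictly inside the minimal-end arc. -/
lemma min_end_claim {L R : Finset ℕ} {g : ℕ → ℕ} {b r₀ : ℕ}
    (hL : L ⊆ gsA n) (hR : R ⊆ gsA n) (hm : IsMatching n L R g) (hc : IsCut n R g b)
    (hr₀ : r₀ ∈ R) (hmin : ∀ r ∈ R, qc n b r₀ ≤ qc n b r) :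
    ∀ r'' ∈ R, r'' ≠ r₀ →
      ¬ (qc n b (g r₀) < qc n b (g r'') ∧ qc n b (g r'') ≤ qc n b r₀) := by
  intro r'' hr'' hne ⟨h1, h2⟩
  have hqf := qf_le_q hL hm hc hr''
  rcases tri hL hm hc hr₀ hr'' (Ne.symm hne) with ⟨t1, t2⟩ | ⟨t1, t2⟩ | t | t
  · have := hmin r'' hr''
    have : qc n b r'' = qc n b r₀ := le_antisymm t2 this
    exact hne (qc_inj (hR hr'') (hR hr₀) this)
  · omega
  · omega
  · omega

lemma match_unique_aux (b : ℕ) : ∀ k (L R : Finset ℕ) (f f' : ℕ → ℕ), R.card ≤ k →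
    L ⊆ gsA n → R ⊆ gsA n → IsMatching n L R f → IsMatching n L R f' →
    IsCut n R f b → IsCut n R f' b → ∀ r ∈ R, f r = f' r := by
  intro k
  induction k with
  | zero =>
    intro L R f f' hcard _ _ _ _ _ _ r hr
    rw [Nat.le_zero, Finset.card_eq_zero] at hcard
    subst hcard
    exact absurd hr (notMem_empty r)
  | succ k ih =>
    intro L R f f' hcard hL hR hm hm' hcf hcf' r hr
    -- pick the arc with minimal right endpoint
    obtain ⟨r₀, hr₀, hmin⟩ := R.exists_min_image (fun r => qc n b r) ⟨r, hr⟩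
    -- f and f' agree at r₀
    have hagree : f r₀ = f' r₀ := by
      have c1 := min_end_claim hL hR hm hcf hr₀ hmin
      have c2 := min_end_claim hL hR hm' hcf' hr₀ hmin
      have hq1 := qf_le_q hL hm hcf hr₀
      have hq2 := qf_le_q hL hm' hcf' hr₀
      -- compare qc of f r₀ and f' r₀
      have hle1 : qc n b (f' r₀) ≤ qc n b (f r₀) := by
        by_contra hlt
        push_neg at hlt
        obtain ⟨r'', hr'', hfr''⟩ := hm.2.2.1 (f' r₀) (hm'.1 r₀ hr₀)
        have hne : r'' ≠ r₀ := by
          intro h; subst h; rw [hfr''] at hlt; exact lt_irrefl _ hlt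
        exact c1 r'' hr'' hne (by rw [hfr'']; exact ⟨hlt, hfr'' ▸ hq2⟩)
      have hle2 : qc n b (f r₀) ≤ qc n b (f' r₀) := by
        by_contra hlt
        push_neg at hlt
        obtain ⟨r'', hr'', hfr''⟩ := hm'.2.2.1 (f r₀) (hm.1 r₀ hr₀)
        have hne : r'' ≠ r₀ := by
          intro h; subst h; rw [hfr''] at hlt; exact lt_irrefl _ hlt
        exact c2 r'' hr'' hne (by rw [hfr'']; exact ⟨hlt, hfr'' ▸ hq1⟩)
      exact qc_inj (hL (hm.1 r₀ hr₀)) (hL (hm'.1 r₀ hr₀)) (le_antisymm hle2 hle1)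
    by_cases hrr : r = r₀
    · rw [hrr, hagree]
    · -- recurse on the smaller sets
      set L' := L.erase (f r₀) with hL'
      set R' := R.erase r₀ with hR'
      have hmf : IsMatching n L' R' f := by
        refine ⟨?_, ?_, ?_, ?_⟩
        · intro s hs
          rw [hR', mem_erase] at hs
          rw [hL', mem_erase]
          exact ⟨fun h => hs.1 (hm.2.1 s hs.2 r₀ hr₀ h), hm.1 s hs.2⟩
        · intro s hs s' hs' h
          rw [hR', mem_erase] at hs hs'
          exact hm.2.1 s hs.2 s' hs'.2 h
        · intro l hl
          rw [hL', mem_erase] at hl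
          obtain ⟨s, hs, hfs⟩ := hm.2.2.1 l hl.2
          refine ⟨s, ?_, hfs⟩
          rw [hR', mem_erase]
          exact ⟨fun h => hl.1 (by rw [← hfs, h]), hs⟩
        · intro s hs s' hs' hne
          rw [hR', mem_erase] at hs hs'
          exact hm.2.2.2 s hs.2 s' hs'.2 hne
      have hmf' : IsMatching n L' R' f' := by
        refine ⟨?_, ?_, ?_, ?_⟩
        · intro s hs
          rw [hR', mem_erase] at hs
          rw [hL', mem_erase]
          refine ⟨fun h => hs.1 (hm'.2.1 s hs.2 r₀ hr₀ (by rw [h, ← hagree])), hm'.1 s hs.2⟩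
        · intro s hs s' hs' h
          rw [hR', mem_erase] at hs hs'
          exact hm'.2.1 s hs.2 s' hs'.2 h
        · intro l hl
          rw [hL', mem_erase] at hl
          obtain ⟨s, hs, hfs⟩ := hm'.2.2.1 l hl.2
          refine ⟨s, ?_, hfs⟩
          rw [hR', mem_erase]
          exact ⟨fun h => hl.1 (by rw [← hfs, h, ← hagree]), hs⟩
        · intro s hs s' hs' hne
          rw [hR', mem_erase] at hs hs'
          exact hm'.2.2.2 s hs.2 s' hs'.2 hne
      have hcard' : R'.card ≤ k := by
        rw [hR']
        have := Finset.card_erase_of_mem hr₀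
        omega
      have hcf2 : IsCut n R' f b := ⟨hcf.1, fun s hs => hcf.2 s (mem_of_mem_erase hs)⟩
      have hcf2' : IsCut n R' f' b := ⟨hcf'.1, fun s hs => hcf'.2 s (mem_of_mem_erase hs)⟩
      exact ih L' R' f f' hcard' (fun x hx => hL (mem_of_mem_erase hx))
        (fun x hx => hR (mem_of_mem_erase hx)) hmf hmf' hcf2 hcf2' r
        (mem_erase.mpr ⟨hrr, hr⟩)

lemma match_unique {L R : Finset ℕ} {f f' : ℕ → ℕ} {b : ℕ}
    (hL : L ⊆ gsA n) (hR : R ⊆ gsA n) (hm : IsMatching n L R f) (hm' : IsMatching n L R f')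
    (hcf : IsCut n R f b) (hcf' : IsCut n R f' b) : ∀ r ∈ R, f r = f' r :=
  match_unique_aux b R.card L R f f' le_rfl hL hR hm hm' hcf hcf'

lemma enclosed_congr {R : Finset ℕ} {f f' : ℕ → ℕ} (h : ∀ r ∈ R, f r = f' r)
    {r : ℕ} (hr : r ∈ R) : enclosed n R f r = enclosed n R f' r := by
  unfold enclosed
  apply filter_congr
  intro x _
  rw [h r hr]
  constructor
  · rintro ⟨h1, h2⟩
    refine ⟨h1, fun r' hr' hne hn => ?_⟩
    rw [← h r' hr']
    exact h2 r' hr' hne (by rw [h r' hr']; exact hn)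
  · rintro ⟨h1, h2⟩
    refine ⟨h1, fun r' hr' hne hn => ?_⟩
    rw [h r' hr']
    exact h2 r' hr' hne (by rw [← h r' hr']; exact hn)

lemma unenclosed_congr {R : Finset ℕ} {f f' : ℕ → ℕ} (h : ∀ r ∈ R, f r = f' r) :
    unenclosed n R f = unenclosed n R f' := by
  unfold unenclosed
  apply filter_congr
  intro x _
  constructor
  · intro h1 r hr
    rw [← h r hr]
    exact h1 r hr
  · intro h1 r hr
    rw [h r hr]
    exact h1 r hr
end chunk5
section chunk6
open Finset
set_option linter.unusedSectionVars false
variable {n : ℕ}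

lemma isCut_of_mem_unenclosed {R : Finset ℕ} {f : ℕ → ℕ} {b : ℕ}
    (hb : b ∈ unenclosed n R f) : IsCut n R f b := by
  unfold unenclosed at hb
  rw [mem_filter] at hb
  exact ⟨hb.1, hb.2⟩

lemma part1 (L R : Finset ℕ) (hL : L ⊆ gsA n) (hR : R ⊆ gsA n) (hcard : L.card = R.card)
    (hex : ∃ f, IsMatching n L R f ∧ (unenclosed n R f).Nonempty) :
    ∃! Bπ : Finset ℕ × {π : Finpartition (gsA n) // IsNoncrossing π},
      TauRel n L R Bπ.1 Bπ.2.1 := by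
  classical
  obtain ⟨f, hm, hU⟩ := hex
  obtain ⟨b, hb⟩ := hU
  have hU : (unenclosed n R f).Nonempty := ⟨b, hb⟩
  have hc : IsCut n R f b := isCut_of_mem_unenclosed hb
  refine ⟨⟨unenclosed n R f, ⟨tauPart hL hR hm hc hU, tauPart_nc hL hR hm hc hU⟩⟩,
    ⟨hL, hR, hcard, f, hm, rfl, rfl⟩, ?_⟩
  rintro ⟨B', π'⟩ ⟨-, -, -, f', hm', hB', hπ'⟩
  obtain ⟨π', nc'⟩ := π'
  simp only at hB' hπ' ⊢
  have hB'mem : B' ∈ π'.parts := by rw [hπ']; exact mem_insert_self _ _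
  have hB'ne : B'.Nonempty := by
    rw [Finset.nonempty_iff_ne_empty]
    intro h
    exact π'.bot_notMem (by rw [← Finset.bot_eq_empty] at h; exact h ▸ hB'mem)
  have hU' : (unenclosed n R f').Nonempty := hB' ▸ hB'ne
  have hUeq : unenclosed n R f = unenclosed n R f' := unenclosed_eq hm hm' hU hU'
  have hb' : b ∈ unenclosed n R f' := hUeq ▸ hb
  have hc' : IsCut n R f' b := isCut_of_mem_unenclosed hb'
  have hfe : ∀ r ∈ R, f' r = f r := match_unique hL hR hm' hm hc' hc
  have hBeq : B' = unenclosed n R f := by rw [hB', ← hUeq]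
  have hPeq : π'.parts = (tauPart hL hR hm hc hU).parts := by
    show π'.parts = insert (unenclosed n R f) (R.image (enclosed n R f))
    rw [hπ', hBeq]
    congr 1
    apply Finset.image_congr
    intro r hr
    exact enclosed_congr hfe hr
  have hπeq : π' = tauPart hL hR hm hc hU := Finpartition.ext hPeq
  refine Prod.ext hBeq (Subtype.ext hπeq)

lemma part3 (L R B : Finset ℕ) (π : Finpartition (gsA n)) (f : ℕ → ℕ)
    (hL : L ⊆ gsA n) (hR : R ⊆ gsA n) (hcard : L.card = R.card) (hm : IsMatching n L R f)
    (hB : B = unenclosed n R f) (hπ : π.parts = insert B (R.image (enclosed n R f)))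
    (i : ℕ) :
    (R.filter (fun r => (enclosed n R f r).card = i)).card +
      (if B.card = i then 1 else 0) =
    (π.parts.filter (fun A => A.card = i)).card := by
  classical
  have hBmem : B ∈ π.parts := by rw [hπ]; exact mem_insert_self _ _
  have hBne : B.Nonempty := by
    rw [Finset.nonempty_iff_ne_empty]
    intro h
    exact π.bot_notMem (by rw [← Finset.bot_eq_empty] at h; exact h ▸ hBmem)
  obtain ⟨b, hb⟩ := hB ▸ hBne
  have hc : IsCut n R f b := isCut_of_mem_unenclosed hb
  have hU : (unenclosed n R f).Nonempty := ⟨b, hb⟩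
  subst hB
  rw [hπ]
  exact counting hL hR hm hc hU i
end chunk6
section chunk7
open Finset
set_option linter.unusedSectionVars false

/-- the element of `A` with maximal cyclic coordinate. -/
noncomputable def qMax (n b : ℕ) (A : Finset ℕ) : ℕ :=
  if h : A.Nonempty then Classical.choose (A.exists_max_image (qc n b) h) else 0

noncomputable def qMin (n b : ℕ) (A : Finset ℕ) : ℕ :=
  if h : A.Nonempty then Classical.choose (A.exists_min_image (qc n b) h) else 0

lemma qMax_mem (n b : ℕ) {A : Finset ℕ} (h : A.Nonempty) : qMax n b A ∈ A := by
  rw [qMax, dif_pos h]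
  exact (Classical.choose_spec (A.exists_max_image (qc n b) h)).1

lemma qMax_spec (n b : ℕ) {A : Finset ℕ} (h : A.Nonempty) :
    ∀ x ∈ A, qc n b x ≤ qc n b (qMax n b A) := by
  rw [qMax, dif_pos h]
  exact (Classical.choose_spec (A.exists_max_image (qc n b) h)).2

lemma qMin_mem (n b : ℕ) {A : Finset ℕ} (h : A.Nonempty) : qMin n b A ∈ A := by
  rw [qMin, dif_pos h]
  exact (Classical.choose_spec (A.exists_min_image (qc n b) h)).1

lemma qMin_spec (n b : ℕ) {A : Finset ℕ} (h : A.Nonempty) :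
    ∀ x ∈ A, qc n b (qMin n b A) ≤ qc n b x := by
  rw [qMin, dif_pos h]
  exact (Classical.choose_spec (A.exists_min_image (qc n b) h)).2

variable {n : ℕ} {π : Finpartition (gsA n)}

lemma parts_nonempty {A : Finset ℕ} (hA : A ∈ π.parts) : A.Nonempty := by
  rw [Finset.nonempty_iff_ne_empty]
  intro h
  exact π.bot_notMem (by rw [← Finset.bot_eq_empty] at h; exact h ▸ hA)

lemma parts_eq_of_mem {A A' : Finset ℕ} (hA : A ∈ π.parts) (hA' : A' ∈ π.parts)
    {x : ℕ} (hx : x ∈ A) (hx' : x ∈ A') : A = A' := by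
  by_contra hne
  exact (Finset.disjoint_left.mp (π.disjoint hA hA' hne)) hx hx'

lemma exists_block {x : ℕ} (hx : x ∈ gsA n) : ∃ A ∈ π.parts, x ∈ A := by
  have : x ∈ π.parts.sup id := by rw [π.sup_parts]; exact hx
  rwa [Finset.mem_sup] at this

/-- the block of `π` containing `x`. -/
noncomputable def blockOf (π : Finpartition (gsA n)) (x : ℕ) : Finset ℕ :=
  if h : ∃ A ∈ π.parts, x ∈ A then h.choose else ∅

lemma blockOf_mem_parts {x : ℕ} (hx : x ∈ gsA n) : blockOf π x ∈ π.parts := by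
  rw [blockOf, dif_pos (exists_block hx)]
  exact (exists_block hx).choose_spec.1

lemma mem_blockOf {x : ℕ} (hx : x ∈ gsA n) : x ∈ blockOf π x := by
  rw [blockOf, dif_pos (exists_block hx)]
  exact (exists_block hx).choose_spec.2

lemma blockOf_eq {x : ℕ} {A : Finset ℕ} (hA : A ∈ π.parts) (hx : x ∈ A) :
    blockOf π x = A := by
  have hxg : x ∈ gsA n := π.le hA hx
  exact parts_eq_of_mem (blockOf_mem_parts hxg) hA (mem_blockOf hxg) hx

section part2
variable (hnc : IsNoncrossing π) {B : Finset ℕ} (hB : B ∈ π.parts) {b : ℕ} (hb : b ∈ B)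
include hnc hB hb

lemma hbg : b ∈ gsA n := π.le hB hb

/-- crossing in cyclic coordinates is impossible for a noncrossing partition. -/
lemma NCQ {X Y : Finset ℕ} (hX : X ∈ π.parts) (hY : Y ∈ π.parts) (hXY : X ≠ Y)
    {x1 x2 y1 y2 : ℕ} (hx1 : x1 ∈ X) (hx2 : x2 ∈ X) (hy1 : y1 ∈ Y) (hy2 : y2 ∈ Y)
    (o1 : qc n b x1 < qc n b y1) (o2 : qc n b y1 < qc n b x2)
    (o3 : qc n b x2 < qc n b y2) : False := by
  have hg1 : x1 ∈ gsA n := π.le hX hx1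
  have hg2 : x2 ∈ gsA n := π.le hX hx2
  have hg3 : y1 ∈ gsA n := π.le hY hy1
  have hg4 : y2 ∈ gsA n := π.le hY hy2
  have kill : ∀ u v : ℕ, u ∈ X → v ∈ Y → SameBlock π u v → False := by
    intro u v hu hv ⟨Z, hZ, huZ, hvZ⟩
    have e1 : Z = X := parts_eq_of_mem hZ hX huZ hu
    have e2 : Z = Y := parts_eq_of_mem hZ hY hvZ hv
    exact hXY (e1 ▸ e2)
  have kill' : ∀ u v : ℕ, u ∈ Y → v ∈ X → SameBlock π u v → False := by
    intro u v hu hv ⟨Z, hZ, huZ, hvZ⟩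
    have e1 : Z = Y := parts_eq_of_mem hZ hY huZ hu
    have e2 : Z = X := parts_eq_of_mem hZ hX hvZ hv
    exact hXY (e2 ▸ e1.symm ▸ rfl)
  rcases rot_bwd hg1 hg3 hg2 hg4 (hbg hnc hB hb) o1 o2 o3 with ⟨p1, p2, p3⟩ | ⟨p1, p2, p3⟩ |
    ⟨p1, p2, p3⟩ | ⟨p1, p2, p3⟩
  · exact kill x1 y1 hx1 hy1 (hnc x1 y1 x2 y2 p1 p2 p3 ⟨X, hX, hx1, hx2⟩ ⟨Y, hY, hy1, hy2⟩)
  · exact kill' y1 x2 hy1 hx2 (hnc y1 x2 y2 x1 p1 p2 p3 ⟨Y, hY, hy1, hy2⟩ ⟨X, hX, hx2, hx1⟩)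
  · exact kill x2 y2 hx2 hy2 (hnc x2 y2 x1 y1 p1 p2 p3 ⟨X, hX, hx2, hx1⟩ ⟨Y, hY, hy2, hy1⟩)
  · exact kill' y2 x1 hy2 hx1 (hnc y2 x1 y1 x2 p1 p2 p3 ⟨Y, hY, hy2, hy1⟩ ⟨X, hX, hx1, hx2⟩)
end part2
end chunk7
section chunk8
open Finset
set_option linter.unusedSectionVars false

/-- the pair `(L,R)` associated with `(B,π)`. -/
noncomputable def R0 (n b : ℕ) (π : Finpartition (gsA n)) (B : Finset ℕ) : Finset ℕ :=
  (π.parts.erase B).image (qMax n b)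
noncomputable def L0 (n b : ℕ) (π : Finpartition (gsA n)) (B : Finset ℕ) : Finset ℕ :=
  (π.parts.erase B).image (qMin n b)
noncomputable def f0 (n b : ℕ) (π : Finpartition (gsA n)) : ℕ → ℕ :=
  fun r => qMin n b (blockOf π r)

variable {n : ℕ} {π : Finpartition (gsA n)}
variable (hnc : IsNoncrossing π) {B : Finset ℕ} (hB : B ∈ π.parts) {b : ℕ} (hb : b ∈ B)
include hnc hB hb

omit hnc hb in
lemma qne {A : Finset ℕ} (hA : A ∈ π.parts.erase B) (hb : b ∈ B) :
    ∀ x ∈ A, qc n b x ≠ 0 := by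
  intro x hx h0
  rw [mem_erase] at hA
  have hxg : x ∈ gsA n := π.le hA.2 hx
  have hbg' : b ∈ gsA n := π.le hB hb
  have : x = b := qc_eq_zero hxg hbg' h0
  subst this
  exact hA.1 (parts_eq_of_mem hA.2 hB hx hb)

lemma f0_qMax {A : Finset ℕ} (hA : A ∈ π.parts.erase B) :
    f0 n b π (qMax n b A) = qMin n b A := by
  rw [mem_erase] at hA
  rw [f0, blockOf_eq hA.2 (qMax_mem n b (parts_nonempty hA.2))]

omit hnc hb in
lemma qMax_injOn : Set.InjOn (qMax n b) (π.parts.erase B) := by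
  intro A hA A' hA' h
  rw [Finset.mem_coe, mem_erase] at hA hA'
  exact parts_eq_of_mem hA.2 hA'.2 (qMax_mem n b (parts_nonempty hA.2))
    (h ▸ qMax_mem n b (parts_nonempty hA'.2))

omit hnc hb in
lemma qMin_injOn : Set.InjOn (qMin n b) (π.parts.erase B) := by
  intro A hA A' hA' h
  rw [Finset.mem_coe, mem_erase] at hA hA'
  exact parts_eq_of_mem hA.2 hA'.2 (qMin_mem n b (parts_nonempty hA.2))
    (h ▸ qMin_mem n b (parts_nonempty hA'.2))

/-- elements of `B` are not inside any block interval. -/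
lemma excl {A : Finset ℕ} (hA : A ∈ π.parts.erase B) {x : ℕ} (hx : x ∈ B) :
    ¬ (qc n b (qMin n b A) ≤ qc n b x ∧ qc n b x ≤ qc n b (qMax n b A)) := by
  rintro ⟨h1, h2⟩
  have hA' := hA
  rw [mem_erase] at hA'
  have hAne := parts_nonempty hA'.2
  have hxA : x ∉ A := by
    intro h
    exact hA'.1 (parts_eq_of_mem hA'.2 hB h hx)
  have hxg : x ∈ gsA n := π.le hB hx
  have h3 : qc n b x ≠ qc n b (qMin n b A) := by
    intro h
    exact hxA ((qc_inj hxg (π.le hA'.2 (qMin_mem n b hAne)) h) ▸ qMin_mem n b hAne)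
  have h4 : qc n b x ≠ qc n b (qMax n b A) := by
    intro h
    exact hxA ((qc_inj hxg (π.le hA'.2 (qMax_mem n b hAne)) h) ▸ qMax_mem n b hAne)
  have h5 := qne hB hA hb (qMin n b A) (qMin_mem n b hAne)
  have h6 : (0:ℤ) ≤ qc n b (qMin n b A) := qc_nonneg
  have h7 : qc n b b = 0 := qc_self
  exact NCQ hnc hB hb hB hA'.2 (fun h => hA'.1 h.symm) hb hx (qMin_mem n b hAne) (qMax_mem n b hAne)
    (by omega) (by omega) (by omega)

/-- the block intervals are pairwise nested or disjoint. -/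
lemma blocks_tri {A A' : Finset ℕ} (hA : A ∈ π.parts.erase B) (hA' : A' ∈ π.parts.erase B)
    (hne : A ≠ A') :
    (qc n b (qMin n b A) < qc n b (qMin n b A') ∧ qc n b (qMax n b A') < qc n b (qMax n b A)) ∨
    (qc n b (qMin n b A') < qc n b (qMin n b A) ∧ qc n b (qMax n b A) < qc n b (qMax n b A')) ∨
    qc n b (qMax n b A) < qc n b (qMin n b A') ∨
    qc n b (qMax n b A') < qc n b (qMin n b A) := by
  have hA2 := hA; have hA'2 := hA'
  rw [mem_erase] at hA2 hA'2
  have hAne := parts_nonempty hA2.2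
  have hA'ne := parts_nonempty hA'2.2
  have hd : ∀ x ∈ A, ∀ y ∈ A', qc n b x ≠ qc n b y := by
    intro x hx y hy h
    have : x = y := qc_inj (π.le hA2.2 hx) (π.le hA'2.2 hy) h
    subst this
    exact hne (parts_eq_of_mem hA2.2 hA'2.2 hx hy)
  have d1 := hd _ (qMin_mem n b hAne) _ (qMin_mem n b hA'ne)
  have d2 := hd _ (qMin_mem n b hAne) _ (qMax_mem n b hA'ne)
  have d3 := hd _ (qMax_mem n b hAne) _ (qMin_mem n b hA'ne)
  have d4 := hd _ (qMax_mem n b hAne) _ (qMax_mem n b hA'ne)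
  have b1 := qMin_spec n b hAne _ (qMax_mem n b hAne)
  have b2 := qMin_spec n b hA'ne _ (qMax_mem n b hA'ne)
  have nc1 : ¬ (qc n b (qMin n b A) < qc n b (qMin n b A') ∧
      qc n b (qMin n b A') < qc n b (qMax n b A) ∧
      qc n b (qMax n b A) < qc n b (qMax n b A')) := by
    rintro ⟨o1, o2, o3⟩
    exact NCQ hnc hB hb hA2.2 hA'2.2 hne (qMin_mem n b hAne) (qMax_mem n b hAne)
      (qMin_mem n b hA'ne) (qMax_mem n b hA'ne) o1 o2 o3
  have nc2 : ¬ (qc n b (qMin n b A') < qc n b (qMin n b A) ∧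
      qc n b (qMin n b A) < qc n b (qMax n b A') ∧
      qc n b (qMax n b A') < qc n b (qMax n b A)) := by
    rintro ⟨o1, o2, o3⟩
    exact NCQ hnc hB hb hA'2.2 hA2.2 (Ne.symm hne) (qMin_mem n b hA'ne) (qMax_mem n b hA'ne)
      (qMin_mem n b hAne) (qMax_mem n b hAne) o1 o2 o3
  omega

omit hnc in
lemma avoid {A : Finset ℕ} (hA : A ∈ π.parts.erase B) :
    ¬ InArc (3*(n+1)) (3 * qMin n b A) (3 * qMax n b A + 2) (3*b+1) := by
  have hA2 := hA
  rw [mem_erase] at hA2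
  have hAne := parts_nonempty hA2.2
  have h1 := qne hB hA hb _ (qMin_mem n b hAne)
  have h2 : (0:ℤ) ≤ qc n b (qMin n b A) := qc_nonneg
  have h3 : (0:ℤ) ≤ qc n b (qMax n b A) := qc_nonneg
  have e1 : relM (3*(n+1)) (3*b+1) (3 * qMin n b A) = 3 * qc n b (qMin n b A) - 1 :=
    psi_left h1
  have e2 : relM (3*(n+1)) (3*b+1) (3 * qMax n b A + 2) = 3 * qc n b (qMax n b A) + 1 :=
    psi_right _
  rw [cut_inArc_p (hM3 n) (3*b+1) (by rw [e1]; omega) (by rw [e2]; omega), e1, e2]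
  have := qMin_spec n b hAne _ (qMax_mem n b hAne)
  omega

lemma matching0 : IsMatching n (L0 n b π B) (R0 n b π B) (f0 n b π) := by
  refine ⟨?_, ?_, ?_, ?_⟩
  · intro r hr
    obtain ⟨A, hA, rfl⟩ := mem_image.mp hr
    rw [f0_qMax hnc hB hb hA]
    exact mem_image_of_mem _ hA
  · intro r hr r' hr' h
    obtain ⟨A, hA, rfl⟩ := mem_image.mp hr
    obtain ⟨A', hA', rfl⟩ := mem_image.mp hr'
    rw [f0_qMax hnc hB hb hA, f0_qMax hnc hB hb hA'] at h
    rw [qMin_injOn hB hA hA' h]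
  · intro l hl
    obtain ⟨A, hA, rfl⟩ := mem_image.mp hl
    exact ⟨qMax n b A, mem_image_of_mem _ hA, f0_qMax hnc hB hb hA⟩
  · intro r hr r' hr' hne
    obtain ⟨A, hA, rfl⟩ := mem_image.mp hr
    obtain ⟨A', hA', rfl⟩ := mem_image.mp hr'
    have hAne : A ≠ A' := fun h => hne (by rw [h])
    rw [f0_qMax hnc hB hb hA, f0_qMax hnc hB hb hA']
    have hA2 := hA; have hA'2 := hA'
    rw [mem_erase] at hA2 hA'2
    have hAn := parts_nonempty hA2.2
    have hA'n := parts_nonempty hA'2.2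
    have q1 := qne hB hA hb _ (qMin_mem n b hAn)
    have q2 := qne hB hA' hb _ (qMin_mem n b hA'n)
    have n1 : (0:ℤ) ≤ qc n b (qMin n b A) := qc_nonneg
    have n2 : (0:ℤ) ≤ qc n b (qMin n b A') := qc_nonneg
    have s1 := qMin_spec n b hAn _ (qMax_mem n b hAn)
    have s2 := qMin_spec n b hA'n _ (qMax_mem n b hA'n)
    have eA1 : relM (3*(n+1)) (3*b+1) (3 * qMin n b A) = 3 * qc n b (qMin n b A) - 1 :=
      psi_left q1
    have eA2 : relM (3*(n+1)) (3*b+1) (3 * qMax n b A + 2) = 3 * qc n b (qMax n b A) + 1 :=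
      psi_right _
    have eB1 : relM (3*(n+1)) (3*b+1) (3 * qMin n b A') = 3 * qc n b (qMin n b A') - 1 :=
      psi_left q2
    have eB2 : relM (3*(n+1)) (3*b+1) (3 * qMax n b A' + 2) = 3 * qc n b (qMax n b A') + 1 :=
      psi_right _
    rcases blocks_tri hnc hB hb hA hA' hAne with ⟨t1, t2⟩ | ⟨t1, t2⟩ | t | t
    · -- A' nested in A
      right; left
      rw [cut_nested (hM3 n) (3*b+1) (avoid hB hb hA') (avoid hB hb hA), eA1, eA2, eB1, eB2]
      refine ⟨by omega, by omega, by omega⟩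
    · left
      rw [cut_nested (hM3 n) (3*b+1) (avoid hB hb hA) (avoid hB hb hA'), eA1, eA2, eB1, eB2]
      refine ⟨by omega, by omega, by omega⟩
    · right; right
      rw [cut_sep (hM3 n) (3*b+1) (avoid hB hb hA) (avoid hB hb hA'), eA1, eA2, eB1, eB2]
      refine ⟨by omega, by omega⟩
    · right; right
      rw [cut_sep (hM3 n) (3*b+1) (avoid hB hb hA) (avoid hB hb hA'), eA1, eA2, eB1, eB2]
      refine ⟨by omega, by omega⟩

lemma cut0 : IsCut n (R0 n b π B) (f0 n b π) b := by
  refine ⟨π.le hB hb, ?_⟩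
  intro r hr
  obtain ⟨A, hA, rfl⟩ := mem_image.mp hr
  rw [f0_qMax hnc hB hb hA]
  exact avoid hB hb hA

omit hnc hb in
lemma L0_sub : L0 n b π B ⊆ gsA n := by
  intro l hl
  obtain ⟨A, hA, rfl⟩ := mem_image.mp hl
  rw [mem_erase] at hA
  exact π.le hA.2 (qMin_mem n b (parts_nonempty hA.2))

omit hnc hb in
lemma R0_sub : R0 n b π B ⊆ gsA n := by
  intro r hr
  obtain ⟨A, hA, rfl⟩ := mem_image.mp hr
  rw [mem_erase] at hA
  exact π.le hA.2 (qMax_mem n b (parts_nonempty hA.2))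

omit hnc hb in
lemma card0 : (L0 n b π B).card = (R0 n b π B).card := by
  rw [L0, R0, Finset.card_image_of_injOn (qMin_injOn hB),
    Finset.card_image_of_injOn (qMax_injOn hB)]
end chunk8
section chunk9
open Finset
set_option linter.unusedSectionVars false
variable {n : ℕ} {π : Finpartition (gsA n)}
variable (hnc : IsNoncrossing π) {B : Finset ℕ} (hB : B ∈ π.parts) {b : ℕ} (hb : b ∈ B)
include hnc hB hb

lemma unenclosed0 : unenclosed n (R0 n b π B) (f0 n b π) = B := by
  have hm := matching0 hnc hB hb
  have hc := cut0 hnc hB hb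
  ext x
  rw [mem_unenclosed_iff (L0_sub hB) (R0_sub hB) hm hc (b := b)]
  constructor
  · rintro ⟨hxg, hcl⟩
    by_cases hxB : blockOf π x = B
    · exact hxB ▸ mem_blockOf (π := π) hxg
    · exfalso
      have hA : blockOf π x ∈ π.parts.erase B :=
        mem_erase.mpr ⟨hxB, blockOf_mem_parts (π := π) hxg⟩
      have hAne := parts_nonempty (blockOf_mem_parts (π := π) hxg)
      have hr : qMax n b (blockOf π x) ∈ R0 n b π B := mem_image_of_mem _ hA
      apply hcl _ hr
      rw [f0_qMax hnc hB hb hA]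
      exact ⟨qMin_spec n b hAne x (mem_blockOf (π := π) hxg), qMax_spec n b hAne x (mem_blockOf (π := π) hxg)⟩
  · intro hxB
    refine ⟨π.le hB hxB, ?_⟩
    intro r hr
    obtain ⟨A, hA, rfl⟩ := mem_image.mp hr
    rw [f0_qMax hnc hB hb hA]
    exact excl hnc hB hb hA hxB

lemma enclosed0 {A : Finset ℕ} (hA : A ∈ π.parts.erase B) :
    enclosed n (R0 n b π B) (f0 n b π) (qMax n b A) = A := by
  have hm := matching0 hnc hB hb
  have hc := cut0 hnc hB hb
  have hA2 := hA
  rw [mem_erase] at hA2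
  have hAne := parts_nonempty hA2.2
  have hrA : qMax n b A ∈ R0 n b π B := mem_image_of_mem _ hA
  ext x
  rw [mem_enclosed_iff (L0_sub hB) (R0_sub hB) hm hc hrA, f0_qMax hnc hB hb hA]
  constructor
  · rintro ⟨hxg, ⟨a1, a2⟩, hcl⟩
    by_cases hxB : blockOf π x = B
    · exfalso
      exact excl hnc hB hb hA (hxB ▸ mem_blockOf (π := π) hxg) ⟨a1, a2⟩
    · set A'' := blockOf π x with hA''
      by_cases hAA : A'' = A
      · exact hAA ▸ mem_blockOf (π := π) hxg
      · exfalso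
        have hA''e : A'' ∈ π.parts.erase B := mem_erase.mpr ⟨hxB, blockOf_mem_parts (π := π) hxg⟩
        have hA''ne := parts_nonempty (blockOf_mem_parts (π := π) hxg)
        have hxA'' : x ∈ A'' := mem_blockOf (π := π) hxg
        have hxnA : x ∉ A := by
          intro h
          exact hAA (parts_eq_of_mem (blockOf_mem_parts (π := π) hxg) hA2.2 hxA'' h)
        have a1'' : qc n b (qMin n b A'') ≤ qc n b x := qMin_spec n b hA''ne x hxA''
        have a2'' : qc n b x ≤ qc n b (qMax n b A'') := qMax_spec n b hA''ne x hxA''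
        have hrne : qMax n b A'' ≠ qMax n b A := by
          intro h
          exact hAA (qMax_injOn hB hA''e hA h)
        have hstrict1 : qc n b (qMin n b A) ≠ qc n b x := by
          intro h
          exact hxnA ((qc_inj (π.le hA2.2 (qMin_mem n b hAne)) hxg h) ▸ qMin_mem n b hAne)
        have hstrict2 : qc n b x ≠ qc n b (qMax n b A) := by
          intro h
          exact hxnA ((qc_inj hxg (π.le hA2.2 (qMax_mem n b hAne)) h).symm ▸ qMax_mem n b hAne)
        rcases blocks_tri hnc hB hb hA hA''e (fun h => hAA h.symm) with ⟨t1, t2⟩ | ⟨t1, t2⟩ | t | t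
        · apply hcl (qMax n b A'') (mem_image_of_mem _ hA''e) hrne
          · rw [f0_qMax hnc hB hb hA''e]
            exact ⟨t1, by omega⟩
          · rw [f0_qMax hnc hB hb hA''e]
            exact ⟨a1'', a2''⟩
        · exact NCQ hnc hB hb (blockOf_mem_parts (π := π) hxg) hA2.2 (fun h => hAA h)
            (qMin_mem n b hA''ne) hxA'' (qMin_mem n b hAne) (qMax_mem n b hAne)
            t1 (by omega) (by omega)
        · omega
        · omega
  · intro hxA
    have hxg : x ∈ gsA n := π.le hA2.2 hxA
    refine ⟨hxg, ⟨qMin_spec n b hAne x hxA, qMax_spec n b hAne x hxA⟩, ?_⟩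
    intro r' hr' hne' hn hcc
    obtain ⟨A', hA', rfl⟩ := mem_image.mp hr'
    rw [f0_qMax hnc hB hb hA'] at hn hcc
    have hA'2 := hA'
    rw [mem_erase] at hA'2
    have hA'ne := parts_nonempty hA'2.2
    have hAA' : A' ≠ A := by
      intro h
      exact hne' (by rw [h])
    have hxnA' : x ∉ A' := by
      intro h
      exact hAA' (parts_eq_of_mem hA'2.2 hA2.2 h hxA)
    have hs1 : qc n b (qMin n b A') ≠ qc n b x := by
      intro h
      exact hxnA' ((qc_inj (π.le hA'2.2 (qMin_mem n b hA'ne)) hxg h) ▸ qMin_mem n b hA'ne)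
    have hs2 : qc n b x ≠ qc n b (qMax n b A') := by
      intro h
      exact hxnA' ((qc_inj hxg (π.le hA'2.2 (qMax_mem n b hA'ne)) h).symm ▸ qMax_mem n b hA'ne)
    exact NCQ hnc hB hb hA2.2 hA'2.2 (fun h => hAA' h.symm) (qMin_mem n b hAne) hxA
      (qMin_mem n b hA'ne) (qMax_mem n b hA'ne)
      hn.1 (by omega) (by omega)

lemma parts_eq0 :
    π.parts = insert B ((R0 n b π B).image (enclosed n (R0 n b π B) (f0 n b π))) := by
  have himg : (R0 n b π B).image (enclosed n (R0 n b π B) (f0 n b π)) = π.parts.erase B := by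
    have heq : Set.EqOn ((enclosed n (R0 n b π B) (f0 n b π)) ∘ (qMax n b)) id
        (π.parts.erase B) := by
      intro A hA
      simp only [Function.comp_apply, id_eq]
      exact enclosed0 hnc hB hb hA
    calc (R0 n b π B).image (enclosed n (R0 n b π B) (f0 n b π))
        = ((π.parts.erase B).image (qMax n b)).image (enclosed n (R0 n b π B) (f0 n b π)) := rfl
      _ = (π.parts.erase B).image ((enclosed n (R0 n b π B) (f0 n b π)) ∘ (qMax n b)) :=
          Finset.image_image
      _ = (π.parts.erase B).image id := Finset.image_congr heq
      _ = π.parts.erase B := Finset.image_id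
  rw [himg, Finset.insert_erase hB]
end chunk9
section chunk10
open Finset
set_option linter.unusedSectionVars false
variable {n : ℕ} {π : Finpartition (gsA n)}

lemma part2 (hnc : IsNoncrossing π) {B : Finset ℕ} (hB : B ∈ π.parts) :
    ∃! LR : Finset ℕ × Finset ℕ, TauRel n LR.1 LR.2 B π := by
  classical
  obtain ⟨b, hb⟩ := parts_nonempty hB
  refine ⟨(L0 n b π B, R0 n b π B), ⟨L0_sub hB, R0_sub hB, card0 hB, f0 n b π,
    matching0 hnc hB hb, (unenclosed0 hnc hB hb).symm, parts_eq0 hnc hB hb⟩, ?_⟩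
  rintro ⟨L₂, R₂⟩ ⟨hL₂, hR₂, hcard₂, f₂, hm₂, hB₂, hπ₂⟩
  simp only at hL₂ hR₂ hcard₂ hm₂ hB₂ hπ₂ ⊢
  have hb' : b ∈ unenclosed n R₂ f₂ := hB₂ ▸ hb
  have hc₂ : IsCut n R₂ f₂ b := isCut_of_mem_unenclosed hb'
  have hEmem : ∀ r ∈ R₂, enclosed n R₂ f₂ r ∈ π.parts.erase B := by
    intro r hr
    rw [mem_erase]
    constructor
    · intro h
      have h1 := fr_mem_enclosed hL₂ hR₂ hm₂ hc₂ hr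
      have h2 := h1
      rw [h, hB₂] at h2
      exact unenclosed_enclosed_disj hL₂ hR₂ hm₂ hc₂ hr h2 h1
    · rw [hπ₂]; exact mem_insert_of_mem (mem_image_of_mem _ hr)
  have hqMax : ∀ r ∈ R₂, qMax n b (enclosed n R₂ f₂ r) = r := by
    intro r hr
    have hrm := r_mem_enclosed hL₂ hR₂ hm₂ hc₂ hr
    have hsub : enclosed n R₂ f₂ r ⊆ gsA n := filter_subset _ _
    have hne : (enclosed n R₂ f₂ r).Nonempty := ⟨r, hrm⟩
    have h1 : qc n b r ≤ qc n b (qMax n b (enclosed n R₂ f₂ r)) := qMax_spec n b hne r hrm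
    have h2 : qc n b (qMax n b (enclosed n R₂ f₂ r)) ≤ qc n b r :=
      ((mem_enclosed_iff hL₂ hR₂ hm₂ hc₂ hr).mp (qMax_mem n b hne)).2.1.2
    exact qc_inj (hsub (qMax_mem n b hne)) (hR₂ hr) (le_antisymm h2 h1)
  have hqMin : ∀ r ∈ R₂, qMin n b (enclosed n R₂ f₂ r) = f₂ r := by
    intro r hr
    have hfm := fr_mem_enclosed hL₂ hR₂ hm₂ hc₂ hr
    have hsub : enclosed n R₂ f₂ r ⊆ gsA n := filter_subset _ _
    have hne : (enclosed n R₂ f₂ r).Nonempty := ⟨f₂ r, hfm⟩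
    have h1 : qc n b (qMin n b (enclosed n R₂ f₂ r)) ≤ qc n b (f₂ r) :=
      qMin_spec n b hne _ hfm
    have h2 : qc n b (f₂ r) ≤ qc n b (qMin n b (enclosed n R₂ f₂ r)) :=
      ((mem_enclosed_iff hL₂ hR₂ hm₂ hc₂ hr).mp (qMin_mem n b hne)).2.1.1
    exact qc_inj (hsub (qMin_mem n b hne)) (hL₂ (hm₂.1 r hr)) (le_antisymm h1 h2)
  have hBni : B ∉ R₂.image (enclosed n R₂ f₂) := by
    intro h
    obtain ⟨r, hr, hE⟩ := mem_image.mp h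
    exact (mem_erase.mp (hEmem r hr)).1 hE
  have herase : π.parts.erase B = R₂.image (enclosed n R₂ f₂) := by
    rw [hπ₂, Finset.erase_insert hBni]
  have hReq : R0 n b π B = R₂ := by
    calc R0 n b π B = (π.parts.erase B).image (qMax n b) := rfl
      _ = (R₂.image (enclosed n R₂ f₂)).image (qMax n b) := by rw [herase]
      _ = R₂.image ((qMax n b) ∘ (enclosed n R₂ f₂)) := Finset.image_image
      _ = R₂.image id := Finset.image_congr (fun r hr => hqMax r hr)
      _ = R₂ := Finset.image_id
  have hLim : L₂ = R₂.image f₂ := by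
    ext l
    rw [mem_image]
    constructor
    · intro hl
      obtain ⟨r, hr, hfr⟩ := hm₂.2.2.1 l hl
      exact ⟨r, hr, hfr⟩
    · rintro ⟨r, hr, rfl⟩
      exact hm₂.1 r hr
  have hLeq : L0 n b π B = L₂ := by
    calc L0 n b π B = (π.parts.erase B).image (qMin n b) := rfl
      _ = (R₂.image (enclosed n R₂ f₂)).image (qMin n b) := by rw [herase]
      _ = R₂.image ((qMin n b) ∘ (enclosed n R₂ f₂)) := Finset.image_image
      _ = R₂.image f₂ := Finset.image_congr (fun r hr => hqMin r hr)
      _ = L₂ := hLim.symm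
  exact Prod.ext hLeq.symm hReq.symm
end chunk10


end aux

/-- **Proposition 4.3.** `τ` is a bijection from the set of pairs `(L, R)` of subsets of
`[n]` with `|L| = |R|` whose cyclic parenthesization leaves some integer unenclosed, onto
the set of pairs `(B, π)` with `π` a noncrossing partition of `[n]` and `B` a block of `π`.
Moreover if `τ(L,R) = (B, π)`, `π` has type `(b; b₁, …, b_n)` and `|B| = j`, then `(L, R)`
has type `(b-1; b₁, …, b_j - 1, …, b_n)`. -/
theorem stmt6 (n : ℕ) :
    (∀ L R : Finset ℕ, L ⊆ gsA n → R ⊆ gsA n → L.card = R.card →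
      (∃ f, IsMatching n L R f ∧ (unenclosed n R f).Nonempty) →
      ∃! Bπ : Finset ℕ × {π : Finpartition (gsA n) // IsNoncrossing π},
        TauRel n L R Bπ.1 Bπ.2.1) ∧
    (∀ π : Finpartition (gsA n), IsNoncrossing π → ∀ B ∈ π.parts,
      ∃! LR : Finset ℕ × Finset ℕ, TauRel n LR.1 LR.2 B π) ∧
    (∀ (L R B : Finset ℕ) (π : Finpartition (gsA n)) (f : ℕ → ℕ),
      L ⊆ gsA n → R ⊆ gsA n → L.card = R.card → IsMatching n L R f →
      B = unenclosed n R f → π.parts = insert B (R.image (enclosed n R f)) →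
      ∀ i : ℕ,
        (R.filter (fun r => (enclosed n R f r).card = i)).card +
          (if B.card = i then 1 else 0) =
        (π.parts.filter (fun A => A.card = i)).card) := by
  refine ⟨?_, ?_, ?_⟩
  · intro L R hL hR hcard hex
    exact part1 L R hL hR hcard hex
  · intro π hnc B hB
    exact part2 hnc hB
  · intro L R B π f hL hR hcard hm hB hπ i
    exact part3 L R B π f hL hR hcard hm hB hπ i
end
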